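/- arXiv:2002.04086 — 4 statements merged into one kernel-verified Lean document; each statement's English description precedes it below -/
import Mathlib

section
/- Let the under-approximating sets be defined by Λ₀ᴺ = X₀ and Λᵢᴺ = φ(tᵢ, tᵢ₋₁)Λᵢ₋₁ᴺ + Wᵢ for i = 1,…,N, where tᵢ = t̲ + i(t̄ − t̲)/N and Wᵢ = (∫_{tᵢ₋₁}^{tᵢ} φ(tᵢ,s)B(s)ds)·U. Then Λᵢᴺ ⊆ R(tᵢ) for all i ∈ {0,…,N}. -/
open MeasureTheory intervalIntegral Pointwise ENNReal


lemma transition_integrable {n : ℕ} (tl tu : ℝ) (hle : tl ≤ tu)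
    (A : ℝ → EuclideanSpace ℝ (Fin n) →L[ℝ] EuclideanSpace ℝ (Fin n))
    (hA : IntegrableOn A (Set.Icc tl tu))
    (φ : ℝ → ℝ → EuclideanSpace ℝ (Fin n) →L[ℝ] EuclideanSpace ℝ (Fin n))
    (hφid : ∀ s : ℝ, φ s s = ContinuousLinearMap.id ℝ (EuclideanSpace ℝ (Fin n)))
    (hφsg : ∀ t z s : ℝ, (φ t z).comp (φ z s) = φ t s)
    (hφ : ∀ s ∈ Set.Icc tl tu, ∀ t ∈ Set.Icc tl tu,
      φ t s = ContinuousLinearMap.id ℝ (EuclideanSpace ℝ (Fin n))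
        + ∫ z in s..t, (A z).comp (φ z s)) :
    IntegrableOn (fun z => (A z).comp (φ z tl)) (Set.Ioc tl tu) := by
  classical
  set g : ℝ → EuclideanSpace ℝ (Fin n) →L[ℝ] EuclideanSpace ℝ (Fin n) :=
    fun z => (A z).comp (φ z tl) with hgdef
  have hEq : ∀ x ∈ Set.Icc tl tu, φ x tl
      = ContinuousLinearMap.id ℝ (EuclideanSpace ℝ (Fin n)) + ∫ z in tl..x, g z :=
    fun x hx => hφ tl ⟨le_rfl, hle⟩ x hx
  have hAm : AEStronglyMeasurable A (volume.restrict (Set.Icc tl tu)) := hA.aestronglyMeasurable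
  have haint : IntegrableOn (fun z => ‖A z‖) (Set.Icc tl tu) := hA.norm
  -- the "good" set
  set S : Set ℝ := {t | t ∈ Set.Icc tl tu ∧ IntegrableOn g (Set.Ioc tl t)} with hSdef
  have htlS : tl ∈ S := ⟨⟨le_rfl, hle⟩, by simp [integrableOn_empty]⟩
  have hSne : S.Nonempty := ⟨tl, htlS⟩
  have hSbdd : BddAbove S := ⟨tu, fun t ht => ht.1.2⟩
  have hdown : ∀ t ∈ S, ∀ t', tl ≤ t' → t' ≤ t → t' ∈ S := by
    intro t ht t' h1 h2
    exact ⟨⟨h1, h2.trans ht.1.2⟩, ht.2.mono_set (Set.Ioc_subset_Ioc le_rfl h2)⟩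
  set τ := sSup S with hτdef
  have hτmem : τ ∈ Set.Icc tl tu := ⟨le_csSup hSbdd htlS, csSup_le hSne fun t ht => ht.1.2⟩
  have hIco : ∀ t, tl ≤ t → t < τ → t ∈ S := by
    intro t h1 h2
    obtain ⟨s, hs, hts⟩ := exists_lt_of_lt_csSup hSne h2
    exact hdown s hs t h1 hts.le
  -- outside S the transition matrix is the identity, hence g = A there
  have hid : ∀ z ∈ Set.Icc tl tu, z ∉ S → φ z tl
      = ContinuousLinearMap.id ℝ (EuclideanSpace ℝ (Fin n)) := by
    intro z hz hzS
    have hni : ¬ IntervalIntegrable g volume tl z := by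
      rw [intervalIntegrable_iff_integrableOn_Ioc_of_le hz.1]
      exact fun h => hzS ⟨hz, h⟩
    rw [hEq z hz, intervalIntegral.integral_undef hni, add_zero]
  have htail : ∀ z ∈ Set.Ioc τ tu, g z = A z := by
    intro z hz
    have hzS : z ∉ S := fun h => absurd (le_csSup hSbdd h) (not_le.2 hz.1)
    rw [hgdef]
    simp only
    rw [hid z ⟨hτmem.1.trans hz.1.le, hz.2⟩ hzS, ContinuousLinearMap.comp_id]
  have h2 : IntegrableOn g (Set.Ioc τ tu) := by
    refine (hA.mono_set ?_).congr_fun (fun z hz => (htail z hz).symm) measurableSet_Ioc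
    exact fun z hz => ⟨hτmem.1.trans hz.1.le, hz.2⟩
  -- continuity of x ↦ φ x tl on good intervals
  have hcont_of : ∀ t ∈ Set.Icc tl tu, IntegrableOn g (Set.Ioc tl t) →
      ContinuousOn (fun x => φ x tl) (Set.Icc tl t) := by
    intro t ht hint
    have hii : IntervalIntegrable g volume tl t :=
      (intervalIntegrable_iff_integrableOn_Ioc_of_le ht.1).2 hint
    have h1 : ContinuousOn (fun x => ∫ z in tl..x, g z) (Set.uIcc tl t) :=
      intervalIntegral.continuousOn_primitive_interval' hii Set.left_mem_uIcc
    rw [Set.uIcc_of_le ht.1] at h1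
    exact (continuousOn_const.add h1).congr
      (fun x hx => hEq x ⟨hx.1, hx.2.trans ht.2⟩)
  have h1 : IntegrableOn g (Set.Ioc tl τ) := by
    by_cases hτS : τ ∈ S
    · exact hτS.2
    · -- τ ∉ S; then tl < τ and all of [tl, τ) is good
      have hlt : tl < τ := lt_of_le_of_ne hτmem.1 (fun h => hτS (h ▸ htlS))
      -- choose s < τ with small mass of ‖A‖ on (s, τ]
      have hPcont : ContinuousOn (fun x => ∫ z in Set.Ioc tl x, ‖A z‖) (Set.Icc tl tu) :=
        intervalIntegral.continuousOn_primitive haint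
      have hne : (nhdsWithin τ (Set.Ico tl τ)).NeBot := by
        rw [← mem_closure_iff_nhdsWithin_neBot, closure_Ico hlt.ne]
        exact Set.right_mem_Icc.2 hlt.le
      have htend : Filter.Tendsto
          (fun x => (∫ z in Set.Ioc tl τ, ‖A z‖) - ∫ z in Set.Ioc tl x, ‖A z‖)
          (nhdsWithin τ (Set.Ico tl τ)) (nhds 0) := by
        have h := (hPcont τ hτmem).mono
          (fun x (hx : x ∈ Set.Ico tl τ) => ⟨hx.1, hx.2.le.trans hτmem.2⟩)
        have h2 := (tendsto_const_nhds (x := ∫ z in Set.Ioc tl τ, ‖A z‖)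
          (f := nhdsWithin τ (Set.Ico tl τ))).sub h
        rwa [sub_self] at h2
      have hev : ∀ᶠ x in nhdsWithin τ (Set.Ico tl τ),
          (∫ z in Set.Ioc tl τ, ‖A z‖) - (∫ z in Set.Ioc tl x, ‖A z‖) < 1/2 :=
        htend.eventually_lt_const (by norm_num)
      obtain ⟨s, hsmall, hsIco⟩ := (hev.and eventually_mem_nhdsWithin).exists
      have hsS : s ∈ S := hIco s hsIco.1 hsIco.2
      have hsIcc : s ∈ Set.Icc tl tu := ⟨hsIco.1, hsIco.2.le.trans hτmem.2⟩
      have hmass : ∫ z in Set.Ioc s τ, ‖A z‖ ≤ 1/2 := by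
        have hii1 : IntervalIntegrable (fun z => ‖A z‖) volume tl s :=
          (intervalIntegrable_iff_integrableOn_Ioc_of_le hsIco.1).2
            (haint.mono_set (Set.Ioc_subset_Icc_self.trans (Set.Icc_subset_Icc le_rfl hsIcc.2)))
        have hii2 : IntervalIntegrable (fun z => ‖A z‖) volume s τ :=
          (intervalIntegrable_iff_integrableOn_Ioc_of_le hsIco.2.le).2
            (haint.mono_set (fun z hz => ⟨hsIcc.1.trans hz.1.le, hz.2.trans hτmem.2⟩))
        have hadd := intervalIntegral.integral_add_adjacent_intervals hii1 hii2
        rw [intervalIntegral.integral_of_le hsIco.1, intervalIntegral.integral_of_le hsIco.2.le,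
          intervalIntegral.integral_of_le (hsIco.1.trans hsIco.2.le)] at hadd
        have hp1 : 0 ≤ ∫ z in Set.Ioc tl s, ‖A z‖ :=
          setIntegral_nonneg measurableSet_Ioc (fun z _ => norm_nonneg _)
        linarith
      -- uniform bound ‖φ x s‖ ≤ 2 on [s, τ)
      have hb2 : ∀ x ∈ Set.Ico s τ, ‖φ x s‖ ≤ 2 := by
        intro x₁ hx₁
        have hx₁S : x₁ ∈ S := hIco _ (hsIcc.1.trans hx₁.1) hx₁.2
        have hx₁Icc : x₁ ∈ Set.Icc tl tu := hx₁S.1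
        have hcφtl : ContinuousOn (fun x => φ x tl) (Set.Icc tl x₁) :=
          hcont_of x₁ hx₁Icc hx₁S.2
        have hcs : ContinuousOn (fun x => φ x s) (Set.Icc s x₁) := by
          have hmulc : ContinuousOn (fun x => φ x tl * φ tl s) (Set.Icc s x₁) :=
            ContinuousOn.mul (hcφtl.mono (Set.Icc_subset_Icc hsIcc.1 le_rfl))
              continuousOn_const
          refine hmulc.congr (fun x _ => ?_)
          exact (hφsg x tl s).symm
        obtain ⟨x₀, hx₀mem, hx₀max⟩ :=
          IsCompact.exists_isMaxOn isCompact_Icc ⟨s, Set.left_mem_Icc.2 hx₁.1⟩ hcs.norm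
        set C := ‖φ x₀ s‖ with hCdef
        have hCnn : (0:ℝ) ≤ C := norm_nonneg _
        have hsub1 : Set.Ioc s x₀ ⊆ Set.Icc tl tu := fun z hz =>
          ⟨hsIcc.1.trans hz.1.le, hz.2.trans (hx₁Icc.2.trans' hx₀mem.2)⟩
        have hmeasf : AEStronglyMeasurable (fun z => (A z) * (φ z s))
            (volume.restrict (Set.Ioc s x₀)) := by
          refine AEStronglyMeasurable.mul (hAm.mono_measure (Measure.restrict_mono hsub1 le_rfl)) ?_
          exact ((hcs.mono (fun z hz => ⟨hz.1.le, hz.2.trans hx₀mem.2⟩)).aestronglyMeasurable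
            measurableSet_Ioc)
        have hdom : IntegrableOn (fun z => ‖A z‖ * C) (Set.Ioc s x₀) :=
          (haint.mono_set hsub1).mul_const C
        have hfint : IntegrableOn (fun z => A z * φ z s) (Set.Ioc s x₀) := by
          refine Integrable.mono' hdom hmeasf ?_
          refine (ae_restrict_iff' measurableSet_Ioc).2 (Filter.Eventually.of_forall ?_)
          intro z hz
          refine (norm_mul_le _ _).trans ?_
          exact mul_le_mul_of_nonneg_left
            (hx₀max ⟨hz.1.le, hz.2.trans hx₀mem.2⟩) (norm_nonneg _)
        have hx₀Icc : x₀ ∈ Set.Icc tl tu :=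
          ⟨hsIcc.1.trans hx₀mem.1, hx₀mem.2.trans hx₁Icc.2⟩
        have heq := hφ s hsIcc x₀ hx₀Icc
        have hfii : IntervalIntegrable (fun z => (A z).comp (φ z s)) volume s x₀ :=
          (intervalIntegrable_iff_integrableOn_Ioc_of_le hx₀mem.1).2 hfint
        have hC2 : C ≤ 2 := by
          have hn1 : ‖φ x₀ s‖ ≤ 1 + ∫ z in s..x₀, ‖(A z).comp (φ z s)‖ := by
            rw [heq]
            refine (norm_add_le _ _).trans (add_le_add ContinuousLinearMap.norm_id_le ?_)
            exact intervalIntegral.norm_integral_le_integral_norm hx₀mem.1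
          have hn2 : (∫ z in s..x₀, ‖(A z).comp (φ z s)‖)
              ≤ ∫ z in Set.Ioc s x₀, ‖A z‖ * C := by
            rw [intervalIntegral.integral_of_le hx₀mem.1]
            refine setIntegral_mono_on hfint.norm hdom measurableSet_Ioc ?_
            intro z hz
            refine (ContinuousLinearMap.opNorm_comp_le _ _).trans ?_
            exact mul_le_mul_of_nonneg_left
              (hx₀max ⟨hz.1.le, hz.2.trans hx₀mem.2⟩) (norm_nonneg _)
          have hn3 : (∫ z in Set.Ioc s x₀, ‖A z‖ * C) ≤ ∫ z in Set.Ioc s τ, ‖A z‖ * C := by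
            refine setIntegral_mono_set
              ((haint.mono_set
                (fun z hz => ⟨hsIcc.1.trans hz.1.le, hz.2.trans hτmem.2⟩)).mul_const C)
              ((ae_restrict_iff' measurableSet_Ioc).2 (Filter.Eventually.of_forall
                (fun z _ => mul_nonneg (norm_nonneg _) hCnn))) ?_
            exact Filter.Eventually.of_forall
              (Set.Ioc_subset_Ioc le_rfl ((hx₀mem.2.trans_lt hx₁.2).le))
          have hn4 : (∫ z in Set.Ioc s τ, ‖A z‖ * C) ≤ (1/2) * C := by
            rw [MeasureTheory.integral_mul_const]
            exact mul_le_mul_of_nonneg_right hmass hCnn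
          have : C ≤ 1 + 1/2 * C := by
            calc C = ‖φ x₀ s‖ := rfl
              _ ≤ _ := hn1
              _ ≤ 1 + ∫ z in Set.Ioc s x₀, ‖A z‖ * C := by linarith
              _ ≤ 1 + ∫ z in Set.Ioc s τ, ‖A z‖ * C := by linarith
              _ ≤ 1 + 1/2 * C := by linarith
          linarith
        exact le_trans (hx₀max (Set.right_mem_Icc.2 hx₁.1)) hC2
      -- bound on φ x tl on [s, τ)
      have hbtl : ∀ x ∈ Set.Ico s τ, ‖φ x tl‖ ≤ 2 * ‖φ s tl‖ := by
        intro x hx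
        rw [← hφsg x s tl]
        exact (ContinuousLinearMap.opNorm_comp_le _ _).trans
          (mul_le_mul_of_nonneg_right (hb2 x hx) (norm_nonneg _))
      -- continuity of φ · tl on [tl, τ)
      have hcontIco : ContinuousOn (fun x => φ x tl) (Set.Ico tl τ) := by
        intro x hx
        obtain ⟨t, hxt, htτ⟩ := exists_between hx.2
        have htS : t ∈ S := hIco t (hx.1.trans hxt.le) htτ
        have hcw := (hcont_of t htS.1 htS.2) x ⟨hx.1, hxt.le⟩
        refine hcw.mono_of_mem_nhdsWithin ?_
        refine Filter.mem_of_superset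
          (Filter.inter_mem (mem_nhdsWithin_of_mem_nhds (Iio_mem_nhds hxt))
            self_mem_nhdsWithin) ?_
        exact fun z hz => ⟨hz.2.1, hz.1.le⟩
      -- integrability of g on (s, τ)
      have hgOo : IntegrableOn g (Set.Ioo s τ) := by
        have hsub : Set.Ioo s τ ⊆ Set.Icc tl tu := fun z hz =>
          ⟨hsIcc.1.trans hz.1.le, hz.2.le.trans hτmem.2⟩
        have hmg : AEStronglyMeasurable g (volume.restrict (Set.Ioo s τ)) := by
          have := AEStronglyMeasurable.mul
            (hAm.mono_measure (Measure.restrict_mono hsub le_rfl))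
            ((hcontIco.mono (fun z hz => ⟨hsIcc.1.trans hz.1.le, hz.2⟩)).aestronglyMeasurable
              measurableSet_Ioo)
          exact this
        refine Integrable.mono' ((haint.mono_set hsub).mul_const (2 * ‖φ s tl‖)) hmg ?_
        refine (ae_restrict_iff' measurableSet_Ioo).2 (Filter.Eventually.of_forall ?_)
        intro z hz
        refine (norm_mul_le _ _).trans ?_
        exact mul_le_mul_of_nonneg_left (hbtl z ⟨hz.1.le, hz.2⟩) (norm_nonneg _)
      have hgsτ : IntegrableOn g (Set.Ioc s τ) :=
        hgOo.congr_set_ae (MeasureTheory.Ioo_ae_eq_Ioc).symm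
      have : Set.Ioc tl τ = Set.Ioc tl s ∪ Set.Ioc s τ :=
        (Set.Ioc_union_Ioc_eq_Ioc hsIco.1 hsIco.2.le).symm
      rw [this]
      exact hsS.2.union hgsτ
  have : Set.Ioc tl tu = Set.Ioc tl τ ∪ Set.Ioc τ tu :=
    (Set.Ioc_union_Ioc_eq_Ioc hτmem.1 hτmem.2).symm
  rw [this]
  exact h1.union h2

/-- The reachable set at time `t` of `ẋ = A(t)x + B(t)u(t)` (with transition matrix `φ`),
from initial time `tl`, initial set `X₀`, and measurable inputs valued in `U`. -/
noncomputable def reachSet {n m : ℕ} (tl : ℝ)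
    (φ : ℝ → ℝ → EuclideanSpace ℝ (Fin n) →L[ℝ] EuclideanSpace ℝ (Fin n))
    (B : ℝ → EuclideanSpace ℝ (Fin m) →L[ℝ] EuclideanSpace ℝ (Fin n))
    (X₀ : Set (EuclideanSpace ℝ (Fin n))) (U : Set (EuclideanSpace ℝ (Fin m)))
    (t : ℝ) : Set (EuclideanSpace ℝ (Fin n)) :=
  {x | ∃ x₀ ∈ X₀, ∃ u : ℝ → EuclideanSpace ℝ (Fin m), Measurable u ∧ (∀ s, u s ∈ U) ∧
    x = φ t tl x₀ + ∫ s in tl..t, φ t s (B s (u s))}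

/-- The iterates `Λ₀ᴺ = X₀`,
`Λᵢᴺ = φ(tᵢ,tᵢ₋₁)Λᵢ₋₁ᴺ + (∫_{tᵢ₋₁}^{tᵢ} φ(tᵢ,s)B(s) ds)·U` (uniform grid `tᵢ`) satisfy
`Λᵢᴺ ⊆ R(tᵢ)` for all `i ∈ {0,…,N}`. -/
theorem iterates_subset_reachable {n m : ℕ} (tl tu : ℝ) (hle : tl ≤ tu)
    (A : ℝ → EuclideanSpace ℝ (Fin n) →L[ℝ] EuclideanSpace ℝ (Fin n))
    (hA : IntegrableOn A (Set.Icc tl tu))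
    (B : ℝ → EuclideanSpace ℝ (Fin m) →L[ℝ] EuclideanSpace ℝ (Fin n))
    (hBmeas : AEStronglyMeasurable B (volume.restrict (Set.Icc tl tu)))
    (p : ℝ≥0∞) (hp : 1 < p)
    (hBp : MemLp B p (volume.restrict (Set.Icc tl tu)))
    (X₀ : Set (EuclideanSpace ℝ (Fin n))) (U : Set (EuclideanSpace ℝ (Fin m)))
    (hX₀ne : X₀.Nonempty) (hX₀cp : IsCompact X₀) (hX₀cv : Convex ℝ X₀)
    (hUne : U.Nonempty) (hUcp : IsCompact U) (hUcv : Convex ℝ U)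
    (φ : ℝ → ℝ → EuclideanSpace ℝ (Fin n) →L[ℝ] EuclideanSpace ℝ (Fin n))
    (hφid : ∀ s : ℝ, φ s s = ContinuousLinearMap.id ℝ (EuclideanSpace ℝ (Fin n)))
    (hφsg : ∀ t z s : ℝ, (φ t z).comp (φ z s) = φ t s)
    (hφ : ∀ s ∈ Set.Icc tl tu, ∀ t ∈ Set.Icc tl tu,
      φ t s = ContinuousLinearMap.id ℝ (EuclideanSpace ℝ (Fin n))
        + ∫ z in s..t, (A z).comp (φ z s))
    (N : ℕ) (hN : 0 < N)
    (ti : ℕ → ℝ) (hti : ∀ i : ℕ, ti i = tl + i * (tu - tl) / N)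
    (Λ : ℕ → Set (EuclideanSpace ℝ (Fin n)))
    (hΛ0 : Λ 0 = X₀)
    (hΛ : ∀ i : ℕ, 1 ≤ i → i ≤ N →
      Λ i = (fun x => φ (ti i) (ti (i - 1)) x) '' Λ (i - 1)
        + (fun u => (∫ s in ti (i - 1)..ti i, (φ (ti i) s).comp (B s)) u) '' U) :
    ∀ i : ℕ, i ≤ N → Λ i ⊆ reachSet tl φ B X₀ U (ti i) := by
  classical
  -- the fundamental integrability fact
  have hg : IntegrableOn (fun z => (A z).comp (φ z tl)) (Set.Ioc tl tu) :=
    transition_integrable tl tu hle A hA φ hφid hφsg hφ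
  -- continuity of x ↦ φ x tl on [tl, tu]
  have hconth : ContinuousOn (fun x => φ x tl) (Set.Icc tl tu) := by
    have hii : IntervalIntegrable (fun z => (A z).comp (φ z tl)) volume tl tu :=
      (intervalIntegrable_iff_integrableOn_Ioc_of_le hle).2 hg
    have h1 : ContinuousOn (fun x => ∫ z in tl..x, (A z).comp (φ z tl)) (Set.uIcc tl tu) :=
      intervalIntegral.continuousOn_primitive_interval' hii Set.left_mem_uIcc
    rw [Set.uIcc_of_le hle] at h1
    exact (continuousOn_const.add h1).congr (fun x hx => hφ tl ⟨le_rfl, hle⟩ x hx)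
  -- units
  have hunit1 : ∀ s : ℝ, (φ s tl) * (φ tl s) = 1 := by
    intro s
    have := hφsg s tl s
    rw [hφid s] at this
    exact this
  have hunit2 : ∀ s : ℝ, (φ tl s) * (φ s tl) = 1 := by
    intro s
    have := hφsg tl s tl
    rw [hφid tl] at this
    exact this
  -- continuity of s ↦ φ tl s on [tl, tu]
  have hKcont : ContinuousOn (fun s => φ tl s) (Set.Icc tl tu) := by
    set uφ : ℝ → (EuclideanSpace ℝ (Fin n) →L[ℝ] EuclideanSpace ℝ (Fin n))ˣ :=
      fun s => ⟨φ s tl, φ tl s, hunit1 s, hunit2 s⟩ with huφ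
    have hrw : ∀ s : ℝ, φ tl s = Ring.inverse (φ s tl) := by
      intro s
      rw [show φ s tl = ((uφ s : (EuclideanSpace ℝ (Fin n) →L[ℝ] EuclideanSpace ℝ (Fin n))ˣ) :
        EuclideanSpace ℝ (Fin n) →L[ℝ] EuclideanSpace ℝ (Fin n)) from rfl, Ring.inverse_unit]
      rfl
    have : ContinuousOn (fun s => Ring.inverse (φ s tl)) (Set.Icc tl tu) := by
      intro s hs
      exact ContinuousAt.comp_continuousWithinAt (x := s) (f := fun x => φ x tl)
        (NormedRing.inverse_continuousAt (uφ s)) (hconth s hs)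
    exact this.congr (fun s _ => hrw s)
  obtain ⟨CK, hCK⟩ := isCompact_Icc.exists_bound_of_continuousOn hKcont
  have hCK0 : 0 ≤ CK := le_trans (norm_nonneg _) (hCK tl ⟨le_rfl, hle⟩)
  obtain ⟨CU, hCU⟩ := hUcp.isBounded.exists_norm_le
  have hCU0 : 0 ≤ CU := le_trans (norm_nonneg _) (hCU _ hUne.some_mem)
  -- B is integrable
  have hBint : IntegrableOn B (Set.Icc tl tu) := by
    haveI : IsFiniteMeasure (volume.restrict (Set.Icc tl tu)) :=
      ⟨by rw [Measure.restrict_apply_univ]; exact isCompact_Icc.measure_lt_top⟩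
    exact hBp.integrable hp.le
  have hKm : AEStronglyMeasurable (fun s => φ tl s) (volume.restrict (Set.Icc tl tu)) :=
    hKcont.aestronglyMeasurable measurableSet_Icc
  -- integrability of the controlled vector integrand
  have hvecInt : ∀ t ∈ Set.Icc tl tu, ∀ u : ℝ → EuclideanSpace ℝ (Fin m), Measurable u →
      (∀ s, u s ∈ U) →
      IntegrableOn (fun s => φ t s (B s (u s))) (Set.Icc tl tu) := by
    intro t ht u hu huU
    have h1 : AEStronglyMeasurable (fun s => B s (u s))
        (volume.restrict (Set.Icc tl tu)) :=
      (isBoundedBilinearMap_apply (𝕜 := ℝ)).continuous.comp_aestronglyMeasurable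
        (hBmeas.prodMk hu.aestronglyMeasurable)
    have h2 : AEStronglyMeasurable (fun s => (φ tl s) (B s (u s)))
        (volume.restrict (Set.Icc tl tu)) :=
      (isBoundedBilinearMap_apply (𝕜 := ℝ)).continuous.comp_aestronglyMeasurable
        (hKm.prodMk h1)
    have h3 : AEStronglyMeasurable (fun s => (φ t tl) ((φ tl s) (B s (u s))))
        (volume.restrict (Set.Icc tl tu)) :=
      (φ t tl).continuous.comp_aestronglyMeasurable h2
    have hmeas : AEStronglyMeasurable (fun s => φ t s (B s (u s)))
        (volume.restrict (Set.Icc tl tu)) := by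
      refine h3.congr (Filter.Eventually.of_forall (fun s => ?_))
      show (φ t tl) ((φ tl s) ((B s) (u s))) = (φ t s) ((B s) (u s))
      rw [← hφsg t tl s, ContinuousLinearMap.comp_apply]
    refine Integrable.mono' ((hBint.norm.const_mul (‖φ t tl‖ * CK * CU))) hmeas ?_
    refine (ae_restrict_iff' measurableSet_Icc).2 (Filter.Eventually.of_forall ?_)
    intro s hs
    have e1 : ‖φ t s (B s (u s))‖ ≤ ‖φ t s‖ * (‖B s‖ * ‖u s‖) :=
      le_trans ((φ t s).le_opNorm _)
        (mul_le_mul_of_nonneg_left ((B s).le_opNorm _) (norm_nonneg _))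
    have e2 : ‖φ t s‖ ≤ ‖φ t tl‖ * CK := by
      rw [← hφsg t tl s]
      exact le_trans (ContinuousLinearMap.opNorm_comp_le _ _)
        (mul_le_mul_of_nonneg_left (hCK s hs) (norm_nonneg _))
    have e3 : ‖u s‖ ≤ CU := hCU _ (huU s)
    calc ‖φ t s (B s (u s))‖ ≤ ‖φ t s‖ * (‖B s‖ * ‖u s‖) := e1
      _ ≤ (‖φ t tl‖ * CK) * (‖B s‖ * CU) := by
          refine mul_le_mul e2 ?_ (by positivity) (by positivity)
          exact mul_le_mul_of_nonneg_left e3 (norm_nonneg _)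
      _ = ‖φ t tl‖ * CK * CU * ‖B s‖ := by ring
  -- integrability of the operator-valued integrand
  have hopInt : ∀ t ∈ Set.Icc tl tu,
      IntegrableOn (fun s => (φ t s).comp (B s)) (Set.Icc tl tu) := by
    intro t ht
    have h1 : AEStronglyMeasurable (fun s => (φ tl s).comp (B s))
        (volume.restrict (Set.Icc tl tu)) := by
      have hcomp : Continuous fun p : (EuclideanSpace ℝ (Fin n) →L[ℝ]
          EuclideanSpace ℝ (Fin n)) × (EuclideanSpace ℝ (Fin m) →L[ℝ]
          EuclideanSpace ℝ (Fin n)) => p.1.comp p.2 :=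
        (ContinuousLinearMap.compL ℝ (EuclideanSpace ℝ (Fin m)) (EuclideanSpace ℝ (Fin n))
          (EuclideanSpace ℝ (Fin n))).continuous₂
      exact hcomp.comp_aestronglyMeasurable (hKm.prodMk hBmeas)
    have h2 : AEStronglyMeasurable (fun s => (φ t tl).comp ((φ tl s).comp (B s)))
        (volume.restrict (Set.Icc tl tu)) :=
      ((ContinuousLinearMap.compL ℝ (EuclideanSpace ℝ (Fin m)) (EuclideanSpace ℝ (Fin n))
        (EuclideanSpace ℝ (Fin n)) (φ t tl)).continuous).comp_aestronglyMeasurable h1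
    have hmeas : AEStronglyMeasurable (fun s => (φ t s).comp (B s))
        (volume.restrict (Set.Icc tl tu)) := by
      refine h2.congr (Filter.Eventually.of_forall (fun s => ?_))
      show (φ t tl).comp ((φ tl s).comp (B s)) = (φ t s).comp (B s)
      rw [← ContinuousLinearMap.comp_assoc, hφsg t tl s]
    refine Integrable.mono' ((hBint.norm.const_mul (‖φ t tl‖ * CK))) hmeas ?_
    refine (ae_restrict_iff' measurableSet_Icc).2 (Filter.Eventually.of_forall ?_)
    intro s hs
    have e2 : ‖φ t s‖ ≤ ‖φ t tl‖ * CK := by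
      rw [← hφsg t tl s]
      exact le_trans (ContinuousLinearMap.opNorm_comp_le _ _)
        (mul_le_mul_of_nonneg_left (hCK s hs) (norm_nonneg _))
    calc ‖(φ t s).comp (B s)‖ ≤ ‖φ t s‖ * ‖B s‖ := ContinuousLinearMap.opNorm_comp_le _ _
      _ ≤ ‖φ t tl‖ * CK * ‖B s‖ := mul_le_mul_of_nonneg_right e2 (norm_nonneg _)
  -- subinterval inclusion
  have hsubI : ∀ c ∈ Set.Icc tl tu, ∀ d ∈ Set.Icc tl tu, Set.uIoc c d ⊆ Set.Icc tl tu := by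
    intro c hc d hd z hz
    exact ⟨le_trans (le_min hc.1 hd.1) hz.1.le, hz.2.trans (max_le hc.2 hd.2)⟩
  have hvecII : ∀ t ∈ Set.Icc tl tu, ∀ u : ℝ → EuclideanSpace ℝ (Fin m), Measurable u →
      (∀ s, u s ∈ U) → ∀ c ∈ Set.Icc tl tu, ∀ d ∈ Set.Icc tl tu,
      IntervalIntegrable (fun s => φ t s (B s (u s))) volume c d := by
    intro t ht u hu huU c hc d hd
    exact intervalIntegrable_iff.2 ((hvecInt t ht u hu huU).mono_set (hsubI c hc d hd))
  have hopII : ∀ t ∈ Set.Icc tl tu, ∀ c ∈ Set.Icc tl tu, ∀ d ∈ Set.Icc tl tu,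
      IntervalIntegrable (fun s => (φ t s).comp (B s)) volume c d := by
    intro t ht c hc d hd
    exact intervalIntegrable_iff.2 ((hopInt t ht).mono_set (hsubI c hc d hd))
  -- grid facts
  have hNpos : (0:ℝ) < N := by exact_mod_cast hN
  have hti0 : ti 0 = tl := by rw [hti 0]; simp
  have htimem : ∀ i : ℕ, i ≤ N → ti i ∈ Set.Icc tl tu := by
    intro i hi
    rw [hti i]
    have h0 : 0 ≤ (i:ℝ) * (tu - tl) / N :=
      div_nonneg (mul_nonneg (Nat.cast_nonneg i) (by linarith)) (Nat.cast_nonneg N)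
    have hiN : (i:ℝ) ≤ N := by exact_mod_cast hi
    have h1 : (i:ℝ) * (tu - tl) / N ≤ tu - tl := by
      rw [div_le_iff₀ hNpos]
      nlinarith
    constructor <;> linarith
  have htimono : ∀ i : ℕ, ti i ≤ ti (i + 1) := by
    intro i
    rw [hti i, hti (i+1)]
    have h1 : ((i:ℝ)) * (tu - tl) / N ≤ ((i+1:ℕ):ℝ) * (tu - tl) / N := by
      push_cast
      have : (0:ℝ) ≤ tu - tl := by linarith
      gcongr
      linarith
    linarith
  -- main induction
  intro i
  induction i with
  | zero =>
    intro _ x hx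
    rw [hΛ0] at hx
    refine ⟨x, hx, fun _ => hUne.some, measurable_const, fun _ => hUne.some_mem, ?_⟩
    rw [hti0, hφid tl, intervalIntegral.integral_same]
    simp
  | succ i ih =>
    intro hiN x hx
    have hiN' : i ≤ N := Nat.le_of_succ_le hiN
    rw [hΛ (i+1) (Nat.succ_le_succ (Nat.zero_le i)) hiN] at hx
    simp only [Nat.add_sub_cancel] at hx
    rw [Set.mem_add] at hx
    obtain ⟨a, ha, b, hb, hab⟩ := hx
    obtain ⟨y, hy, rfl⟩ := ha
    obtain ⟨u₀, hu₀U, rfl⟩ := hb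
    obtain ⟨x₀, hx₀, u, hu, huU, hyrep⟩ := ih hiN' hy
    have htmem := htimem i hiN'
    have ht'mem := htimem (i+1) hiN
    have htle : ti i ≤ ti (i+1) := htimono i
    have htlle : tl ≤ ti i := htmem.1
    set uu : ℝ → EuclideanSpace ℝ (Fin m) := fun s => if s ≤ ti i then u s else u₀ with huudef
    have huumeas : Measurable uu := Measurable.ite measurableSet_Iic hu measurable_const
    have huuU : ∀ s, uu s ∈ U := by
      intro s
      by_cases h : s ≤ ti i
      · simpa [huudef, h] using huU s
      · simpa [huudef, h] using hu₀U
    refine ⟨x₀, hx₀, uu, huumeas, huuU, ?_⟩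
    have hII1 : IntervalIntegrable (fun s => φ (ti (i+1)) s (B s (uu s))) volume tl (ti i) :=
      hvecII _ ht'mem uu huumeas huuU tl ⟨le_rfl, hle⟩ _ htmem
    have hII2 : IntervalIntegrable (fun s => φ (ti (i+1)) s (B s (uu s))) volume (ti i)
        (ti (i+1)) := hvecII _ ht'mem uu huumeas huuU _ htmem _ ht'mem
    have hsplit : (∫ s in tl..ti (i+1), φ (ti (i+1)) s (B s (uu s)))
        = (∫ s in tl..ti i, φ (ti (i+1)) s (B s (uu s)))
          + ∫ s in ti i..ti (i+1), φ (ti (i+1)) s (B s (uu s)) :=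
      (intervalIntegral.integral_add_adjacent_intervals hII1 hII2).symm
    -- first piece
    have hfirst : (∫ s in tl..ti i, φ (ti (i+1)) s (B s (uu s)))
        = φ (ti (i+1)) (ti i) (∫ s in tl..ti i, φ (ti i) s (B s (u s))) := by
      have e1 : (∫ s in tl..ti i, φ (ti (i+1)) s (B s (uu s)))
          = ∫ s in tl..ti i, φ (ti (i+1)) (ti i) (φ (ti i) s (B s (u s))) := by
        refine intervalIntegral.integral_congr (fun s hs => ?_)
        rw [Set.uIcc_of_le htlle] at hs
        rw [show uu s = u s from if_pos hs.2, ← hφsg (ti (i+1)) (ti i) s,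
          ContinuousLinearMap.comp_apply]
      rw [e1]
      exact (φ (ti (i+1)) (ti i)).intervalIntegral_comp_comm
        (hvecII _ htmem u hu huU tl ⟨le_rfl, hle⟩ _ htmem)
    -- second piece
    have hsecond : (∫ s in ti i..ti (i+1), φ (ti (i+1)) s (B s (uu s)))
        = (∫ s in ti i..ti (i+1), (φ (ti (i+1)) s).comp (B s)) u₀ := by
      have e1 : (∫ s in ti i..ti (i+1), φ (ti (i+1)) s (B s (uu s)))
          = ∫ s in ti i..ti (i+1), ((φ (ti (i+1)) s).comp (B s)) u₀ := by
        refine intervalIntegral.integral_congr_ae (MeasureTheory.ae_of_all _ (fun s hs => ?_))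
        rw [Set.uIoc_of_le htle] at hs
        rw [show uu s = u₀ from if_neg (not_le.2 hs.1), ContinuousLinearMap.comp_apply]
      rw [e1]
      exact (ContinuousLinearMap.intervalIntegral_apply
        (hopII _ ht'mem _ htmem _ ht'mem) u₀).symm
    subst hab
    show (φ (ti (i+1)) (ti i)) y + (∫ s in ti i..ti (i+1), (φ (ti (i+1)) s).comp (B s)) u₀
      = (φ (ti (i + 1)) tl) x₀ + ∫ s in tl..ti (i + 1), (φ (ti (i + 1)) s) ((B s) (uu s))
    rw [hyrep, hsplit, hfirst, hsecond, map_add, ← hφsg (ti (i+1)) (ti i) tl,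
      ContinuousLinearMap.comp_apply]
    abel
end

section
/- With the iterates Λᵢᴺ as defined (constant-input piecewise reachable sets over a uniform partition of [t̲,t̄] into N subintervals), the Hausdorff distance d_H(Λᵢᴺ, R(tᵢ)) converges to 0 as N → ∞, uniformly in i ∈ {0,…,N}. -/
open MeasureTheory intervalIntegral Pointwise ENNReal

set_option maxHeartbeats 1000000

lemma piece_reg {E : Type*} [NormedAddCommGroup E] [NormedSpace ℝ E] [CompleteSpace E]
    {A : ℝ → E →L[ℝ] E} {g : ℝ → E →L[ℝ] E} {c d : ℝ} (hcd : c ≤ d)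
    (hA : MeasureTheory.IntegrableOn A (Set.Icc c d))
    (heq : ∀ t ∈ Set.Icc c d, g t = ContinuousLinearMap.id ℝ E + ∫ z in c..t, (A z).comp (g z))
    (hmass : ∫ z in Set.Icc c d, ‖A z‖ ≤ 1 / 2) :
    ContinuousOn g (Set.Icc c d) ∧ ∀ t ∈ Set.Icc c d, ‖g t‖ ≤ 2 := by
  set f : ℝ → E →L[ℝ] E := fun z => (A z).comp (g z) with hf
  set S : Set ℝ := {t | t ∈ Set.Icc c d ∧ IntegrableOn f (Set.Icc c t)} with hS
  have hAnorm : IntegrableOn (fun z => ‖A z‖) (Set.Icc c d) := hA.norm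
  have hmass' : ∀ t₂, c ≤ t₂ → t₂ ≤ d → ∫ z in Set.Icc c t₂, ‖A z‖ ≤ 1/2 := by
    intro t₂ h1 h3
    refine le_trans (setIntegral_mono_set hAnorm ?_ ?_) hmass
    · exact Filter.Eventually.of_forall fun z => norm_nonneg _
    · exact HasSubset.Subset.eventuallyLE (Set.Icc_subset_Icc le_rfl h3)
  have hcS : c ∈ S := by
    refine ⟨⟨le_refl c, hcd⟩, ?_⟩
    rw [Set.Icc_self]
    have : volume.restrict ({c} : Set ℝ) = 0 := by
      rw [Measure.restrict_eq_zero]; exact Real.volume_singleton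
    rw [IntegrableOn, this]
    exact integrable_zero_measure
  have hcont : ∀ t ∈ S, ContinuousOn g (Set.Icc c t) := by
    intro t ht
    have hprim : ContinuousOn (fun τ => ∫ z in Set.Icc c τ, f z) (Set.Icc c t) :=
      continuousOn_primitive_Icc ht.2
    have hsum : ContinuousOn (fun τ => ContinuousLinearMap.id ℝ E + ∫ z in Set.Icc c τ, f z)
        (Set.Icc c t) := continuousOn_const.add hprim
    refine hsum.congr ?_
    intro τ hτ
    rw [heq τ ⟨hτ.1, hτ.2.trans ht.1.2⟩, intervalIntegral.integral_of_le hτ.1,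
      ← integral_Icc_eq_integral_Ioc]
  have hb : ∀ t ∈ S, ∀ τ ∈ Set.Icc c t, ‖g τ‖ ≤ 2 := by
    intro t ht
    have hne : (Set.Icc c t).Nonempty := ⟨c, le_rfl, ht.1.1⟩
    obtain ⟨τ₀, hτ₀, hmax'⟩ := isCompact_Icc.exists_isMaxOn hne (hcont t ht).norm
    have hmax : ∀ τ ∈ Set.Icc c t, ‖g τ‖ ≤ ‖g τ₀‖ := fun τ hτ => hmax' hτ
    set M := ‖g τ₀‖ with hM
    have hM0 : 0 ≤ M := norm_nonneg _
    have hIccsub : Set.Icc c τ₀ ⊆ Set.Icc c t := Set.Icc_subset_Icc le_rfl hτ₀.2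
    have hfb : ∀ z ∈ Set.Icc c τ₀, ‖f z‖ ≤ ‖A z‖ * M := by
      intro z hz
      calc ‖(A z).comp (g z)‖ ≤ ‖A z‖ * ‖g z‖ := ContinuousLinearMap.opNorm_comp_le _ _
        _ ≤ ‖A z‖ * M := mul_le_mul_of_nonneg_left (hmax z (hIccsub hz)) (norm_nonneg _)
    have hfint : IntegrableOn f (Set.Icc c τ₀) := ht.2.mono_set hIccsub
    have hAint : IntegrableOn (fun z => ‖A z‖ * M) (Set.Icc c τ₀) :=
      (hAnorm.mono_set (Set.Icc_subset_Icc le_rfl (hτ₀.2.trans ht.1.2))).mul_const M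
    have hMle : M ≤ 1 + (1/2) * M := by
      have h1 : M ≤ ‖(ContinuousLinearMap.id ℝ E : E →L[ℝ] E)‖ + ‖∫ z in c..τ₀, f z‖ := by
        rw [hM, heq τ₀ ⟨hτ₀.1, hτ₀.2.trans ht.1.2⟩]; exact norm_add_le _ _
      have h2 : ‖∫ z in c..τ₀, f z‖ ≤ ∫ z in c..τ₀, ‖f z‖ :=
        intervalIntegral.norm_integral_le_integral_norm hτ₀.1
      have h3 : (∫ z in c..τ₀, ‖f z‖) ≤ ∫ z in c..τ₀, ‖A z‖ * M := by
        refine intervalIntegral.integral_mono_on hτ₀.1 ?_ ?_ hfb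
        · have : IntegrableOn (fun z => ‖f z‖) (Set.uIcc c τ₀) := by
            rw [Set.uIcc_of_le hτ₀.1]; exact hfint.norm
          exact this.intervalIntegrable
        · have : IntegrableOn (fun z => ‖A z‖ * M) (Set.uIcc c τ₀) := by
            rw [Set.uIcc_of_le hτ₀.1]; exact hAint
          exact this.intervalIntegrable
      have h4 : (∫ z in c..τ₀, ‖A z‖ * M) = (∫ z in Set.Icc c τ₀, ‖A z‖) * M := by
        rw [intervalIntegral.integral_of_le hτ₀.1, ← integral_Icc_eq_integral_Ioc,
          MeasureTheory.integral_mul_const]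
      have h5 : (∫ z in Set.Icc c τ₀, ‖A z‖) * M ≤ (1/2) * M :=
        mul_le_mul_of_nonneg_right (hmass' τ₀ hτ₀.1 (hτ₀.2.trans ht.1.2)) hM0
      have hid : ‖(ContinuousLinearMap.id ℝ E : E →L[ℝ] E)‖ ≤ 1 := ContinuousLinearMap.norm_id_le
      linarith
    have hM2 : M ≤ 2 := by linarith
    intro τ hτ
    exact (hmax τ hτ).trans hM2
  have hoff : ∀ t ∈ Set.Icc c d, t ∉ S → g t = ContinuousLinearMap.id ℝ E := by
    intro t htm hts
    have hni : ¬ IntervalIntegrable f volume c t := by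
      intro h
      refine hts ⟨htm, ?_⟩
      rw [integrableOn_Icc_iff_integrableOn_Ioc (f := f) (by simp)]
      exact (intervalIntegrable_iff_integrableOn_Ioc_of_le htm.1).mp h
    rw [heq t htm, intervalIntegral.integral_undef hni, add_zero]
  have hSd : d ∈ S := by
    by_contra hd
    have hSne : S.Nonempty := ⟨c, hcS⟩
    have hSbdd : BddAbove S := ⟨d, fun t ht => ht.1.2⟩
    set e := sSup S with he
    have hce : c ≤ e := le_csSup hSbdd hcS
    have hed : e ≤ d := csSup_le hSne fun t ht => ht.1.2
    have hdown : ∀ t ∈ S, ∀ τ, c ≤ τ → τ ≤ t → τ ∈ S := by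
      intro t ht τ h1 h2
      exact ⟨⟨h1, h2.trans ht.1.2⟩, ht.2.mono_set (Set.Icc_subset_Icc le_rfl h2)⟩
    have hIco : Set.Ico c e ⊆ S := by
      intro z hz
      obtain ⟨t, htS, hzt⟩ := exists_lt_of_lt_csSup hSne hz.2
      exact hdown t htS z hz.1 hzt.le
    have hgmIco : ContinuousOn g (Set.Ico c e) := by
      intro z hz
      obtain ⟨t, htS, hzt⟩ := exists_lt_of_lt_csSup hSne hz.2
      have h1 : ContinuousWithinAt g (Set.Icc c t) z := (hcont t htS) z ⟨hz.1, hzt.le⟩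
      refine h1.mono_of_mem_nhdsWithin ?_
      rw [mem_nhdsWithin]
      exact ⟨Set.Iio t, isOpen_Iio, hzt, fun w hw => ⟨hw.2.1, le_of_lt hw.1⟩⟩
    have hrestr : volume.restrict (Set.Icc c e) = volume.restrict (Set.Ico c e) :=
      (Measure.restrict_congr_set Ico_ae_eq_Icc).symm
    have hgm : AEStronglyMeasurable g (volume.restrict (Set.Icc c e)) := by
      rw [hrestr]; exact hgmIco.aestronglyMeasurable measurableSet_Ico
    have hAm : AEStronglyMeasurable A (volume.restrict (Set.Icc c e)) :=
      hA.aestronglyMeasurable.mono_measure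
        (Measure.restrict_mono (Set.Icc_subset_Icc le_rfl hed) le_rfl)
    have hfm : AEStronglyMeasurable f (volume.restrict (Set.Icc c e)) :=
      (isBoundedBilinearMap_comp (𝕜 := ℝ)).continuous.comp_aestronglyMeasurable
        (hAm.prodMk hgm)
    have hgb : ∀ᵐ z ∂volume.restrict (Set.Icc c e), ‖g z‖ ≤ 2 := by
      rw [hrestr]
      refine (ae_restrict_iff' measurableSet_Ico).mpr (Filter.Eventually.of_forall ?_)
      intro z hz
      exact hb z (hIco hz) z ⟨hz.1, le_rfl⟩
    have hfce : IntegrableOn f (Set.Icc c e) := by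
      refine Integrable.mono'
        ((hA.mono_set (Set.Icc_subset_Icc le_rfl hed)).norm.const_mul 2) hfm ?_
      filter_upwards [hgb] with z hz
      calc ‖(A z).comp (g z)‖ ≤ ‖A z‖ * ‖g z‖ := ContinuousLinearMap.opNorm_comp_le _ _
        _ ≤ ‖A z‖ * 2 := mul_le_mul_of_nonneg_left hz (norm_nonneg _)
        _ = 2 * ‖A z‖ := mul_comm _ _
    have heS : e ∈ S := ⟨⟨hce, hed⟩, hfce⟩
    have hIocid : ∀ z ∈ Set.Ioc e d, g z = ContinuousLinearMap.id ℝ E := by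
      intro z hz
      refine hoff z ⟨hce.trans hz.1.le, hz.2⟩ ?_
      intro hzS
      exact absurd (le_csSup hSbdd hzS) (not_le.mpr hz.1)
    have hfed : IntegrableOn f (Set.Ioc e d) := by
      refine IntegrableOn.congr_fun
        (hA.mono_set ((Set.Ioc_subset_Icc_self).trans (Set.Icc_subset_Icc hce le_rfl))) ?_
        measurableSet_Ioc
      intro z hz
      simp only [hf]
      rw [hIocid z hz, ContinuousLinearMap.comp_id]
    have hfall : IntegrableOn f (Set.Icc c d) := by
      rw [← Set.Icc_union_Ioc_eq_Icc hce hed]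
      exact hfce.union hfed
    exact hd ⟨⟨hcd, le_rfl⟩, hfall⟩
  exact ⟨hcont d hSd, fun t ht => hb d hSd t ht⟩
lemma small_pieces {W : Type*} [NormedAddCommGroup W] {A : ℝ → W} {a b : ℝ} (hab : a ≤ b)
    (hA : MeasureTheory.IntegrableOn A (Set.Icc a b)) :
    ∃ K : ℕ, 0 < K ∧ ∀ j : ℕ, j < K →
      ∫ z in Set.Icc (a + j * ((b - a) / K)) (a + (j + 1) * ((b - a) / K)), ‖A z‖ ≤ 1 / 2 := by
  have hfin : (∫⁻ z, ‖A z‖₊ ∂(volume.restrict (Set.Icc a b))) ≠ ⊤ := hA.2.ne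
  obtain ⟨δ, hδ0, hδ⟩ := exists_pos_setLIntegral_lt_of_measure_lt hfin
    (ε := ENNReal.ofReal (1/2)) (by simp)
  obtain ⟨δr, hδr0, hδrδ⟩ : ∃ δr : ℝ, 0 < δr ∧ ENNReal.ofReal δr ≤ δ := by
    rcases eq_or_ne δ ⊤ with h | h
    · exact ⟨1, one_pos, by simp [h]⟩
    · exact ⟨δ.toReal, ENNReal.toReal_pos hδ0.ne' h, by rw [ENNReal.ofReal_toReal h]⟩
  refine ⟨⌈(b - a) / δr⌉₊ + 1, Nat.succ_pos _, ?_⟩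
  set K : ℕ := ⌈(b - a) / δr⌉₊ + 1 with hK
  set w : ℝ := (b - a) / K with hwdef
  have hK0 : (0:ℝ) < K := by positivity
  have hw0 : 0 ≤ w := div_nonneg (by linarith) hK0.le
  have hwδr : w < δr := by
    rw [hwdef, div_lt_iff₀ hK0]
    have h1 : (b - a) / δr ≤ (⌈(b - a) / δr⌉₊ : ℝ) := Nat.le_ceil _
    have h2 : ((⌈(b - a) / δr⌉₊ : ℝ)) < K := by
      rw [hK]; push_cast; linarith
    calc b - a = ((b - a) / δr) * δr := by field_simp
      _ ≤ (⌈(b - a) / δr⌉₊ : ℝ) * δr := by nlinarith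
      _ < K * δr := by nlinarith
      _ = δr * K := mul_comm _ _
  intro j hj
  have hsub : Set.Icc (a + j * w) (a + (j + 1) * w) ⊆ Set.Icc a b := by
    apply Set.Icc_subset_Icc
    · nlinarith [Nat.cast_nonneg (α := ℝ) j]
    · have hj1 : ((j:ℝ) + 1) ≤ (K:ℝ) := by exact_mod_cast hj
      have : ((j:ℝ) + 1) * w ≤ K * w := by nlinarith
      have hKw : (K:ℝ) * w = b - a := by rw [hwdef]; field_simp
      push_cast
      nlinarith
  have hmeas : volume.restrict (Set.Icc a b) (Set.Icc (a + j * w) (a + (j + 1) * w)) < δ := by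
    calc volume.restrict (Set.Icc a b) (Set.Icc (a + j * w) (a + (j + 1) * w))
        ≤ volume (Set.Icc (a + j * w) (a + (j + 1) * w)) := Measure.restrict_le_self _
      _ = ENNReal.ofReal w := by rw [Real.volume_Icc]; congr 1; ring
      _ < ENNReal.ofReal δr := (ENNReal.ofReal_lt_ofReal_iff hδr0).mpr hwδr
      _ ≤ δ := hδrδ
  have hlint := hδ _ hmeas
  have hrr : (volume.restrict (Set.Icc a b)).restrict (Set.Icc (a + j * w) (a + (j + 1) * w))
      = volume.restrict (Set.Icc (a + j * w) (a + (j + 1) * w)) := by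
    rw [Measure.restrict_restrict measurableSet_Icc, Set.inter_eq_left.mpr hsub]
  rw [show (∫⁻ z in Set.Icc (a + ↑j * w) (a + (↑j + 1) * w), ‖A z‖₊ ∂volume.restrict (Set.Icc a b))
      = ∫⁻ z in Set.Icc (a + ↑j * w) (a + (↑j + 1) * w), ‖A z‖₊ ∂volume from by rw [← hrr]] at hlint
  have hAm : MeasureTheory.AEStronglyMeasurable A
      (volume.restrict (Set.Icc (a + j * w) (a + (j + 1) * w))) :=
    hA.aestronglyMeasurable.mono_measure (Measure.restrict_mono hsub le_rfl)
  have heq : (∫ z in Set.Icc (a + j * w) (a + (j + 1) * w), ‖A z‖)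
      = (∫⁻ z in Set.Icc (a + ↑j * w) (a + (↑j + 1) * w), ‖A z‖₊ ∂volume).toReal := by
    rw [integral_eq_lintegral_of_nonneg_ae (Filter.Eventually.of_forall fun z => norm_nonneg _)
      hAm.norm]
    congr 1
    apply lintegral_congr
    intro z
    exact (ofReal_norm (A z)).trans rfl
  rw [heq]
  have := ENNReal.toReal_mono (by simp) hlint.le
  rw [ENNReal.toReal_ofReal (by norm_num)] at this
  exact this

lemma uniform_cover {a b : ℝ} (hab : a ≤ b) {K : ℕ} (hK : 0 < K) {t : ℝ}
    (ht : t ∈ Set.Icc a b) :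
    ∃ j, j < K ∧ t ∈ Set.Icc (a + j * ((b - a) / K)) (a + (j + 1) * ((b - a) / K)) := by
  set w : ℝ := (b - a) / K with hwdef
  have hK0 : (0:ℝ) < K := by positivity
  have hKw : (K:ℝ) * w = b - a := by rw [hwdef]; field_simp
  rcases eq_or_lt_of_le (div_nonneg (by linarith : (0:ℝ) ≤ b - a) hK0.le : (0:ℝ) ≤ w) with hw | hw
  · -- w = 0, so a = b and t = a
    have hw0 : w = 0 := hw.symm
    have hba : b - a = 0 := by rw [← hKw, hw0]; ring
    have hta : t = a := le_antisymm (by linarith [ht.2]) ht.1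
    refine ⟨0, hK, ?_⟩
    have : (b - a) / (K:ℝ) = 0 := hw.symm
    simp [hta, this]
    exact hw.le
  · set j : ℕ := min (K - 1) ⌊(t - a) / w⌋₊ with hj
    have hjK : j < K := by
      have : K - 1 < K := Nat.sub_lt hK one_pos
      exact lt_of_le_of_lt (min_le_left _ _) this
    refine ⟨j, hjK, ?_, ?_⟩
    · have h1 : (j : ℝ) ≤ (t - a) / w := by
        calc (j:ℝ) ≤ (⌊(t - a) / w⌋₊ : ℝ) := by exact_mod_cast min_le_right _ _
          _ ≤ (t - a) / w := Nat.floor_le (div_nonneg (by linarith [ht.1]) hw.le)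
      have := (le_div_iff₀ hw).mp h1
      linarith
    · rcases le_or_gt ((K:ℕ) - 1 : ℕ) (⌊(t - a) / w⌋₊) with hmin | hmin
      · have hjeq : j = K - 1 := by rw [hj, min_eq_left hmin]
        have : ((j:ℝ) + 1) = (K:ℝ) := by
          rw [hjeq]
          have : (K - 1 : ℕ) + 1 = K := Nat.succ_pred_eq_of_pos hK
          exact_mod_cast congrArg (Nat.cast (R := ℝ)) this
        rw [this]
        have : a + (K:ℝ) * w = b := by rw [hKw]; ring
        linarith [ht.2]
      · have hjeq : j = ⌊(t - a) / w⌋₊ := by rw [hj, min_eq_right hmin.le]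
        have h2 : (t - a) / w < (j:ℝ) + 1 := by
          rw [hjeq]
          exact_mod_cast Nat.lt_floor_add_one ((t - a) / w)
        have := (div_lt_iff₀ hw).mp h2
        nlinarith
lemma phi_reg {E : Type*} [NormedAddCommGroup E] [NormedSpace ℝ E] [CompleteSpace E]
    {tl tu : ℝ} (hle : tl ≤ tu) {A : ℝ → E →L[ℝ] E}
    (hA : MeasureTheory.IntegrableOn A (Set.Icc tl tu)) {φ : ℝ → ℝ → E →L[ℝ] E}
    (hφid : ∀ s, φ s s = ContinuousLinearMap.id ℝ E)
    (hφsg : ∀ t z s, (φ t z).comp (φ z s) = φ t s)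
    (hφ : ∀ s ∈ Set.Icc tl tu, ∀ t ∈ Set.Icc tl tu,
      φ t s = ContinuousLinearMap.id ℝ E + ∫ z in s..t, (A z).comp (φ z s)) :
    ∃ M : ℝ, 1 ≤ M ∧ (∀ t ∈ Set.Icc tl tu, ‖φ t tl‖ ≤ M) ∧
      (∀ s ∈ Set.Icc tl tu, ‖φ tl s‖ ≤ M) ∧
      AEStronglyMeasurable (fun s => φ tl s) (volume.restrict (Set.Icc tl tu)) := by
  obtain ⟨K, hK, hsmall⟩ := small_pieces hle hA
  set w : ℝ := (tu - tl) / K with hwdef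
  set cs : ℕ → ℝ := fun j => tl + j * w with hcs
  have hK0 : (0:ℝ) < K := by positivity
  have hw0 : 0 ≤ w := div_nonneg (by linarith) hK0.le
  have hcs0 : cs 0 = tl := by simp [hcs]
  have hcsstep : ∀ j : ℕ, cs j ≤ cs (j + 1) := by
    intro j
    simp only [hcs]
    push_cast
    nlinarith
  have hcsmono : Monotone cs := monotone_nat_of_le_succ hcsstep
  have hcsK : cs K = tu := by
    simp only [hcs, hwdef]
    field_simp
    ring
  have hcsmem : ∀ j, j ≤ K → cs j ∈ Set.Icc tl tu := by
    intro j hj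
    constructor
    · rw [← hcs0]; exact hcsmono (Nat.zero_le j)
    · rw [← hcsK]; exact hcsmono hj
  have hpieceSub : ∀ j, j < K → Set.Icc (cs j) (cs (j + 1)) ⊆ Set.Icc tl tu :=
    fun j hj => Set.Icc_subset_Icc (hcsmem j hj.le).1 (hcsmem (j + 1) hj).2
  have hpiece : ∀ j, j < K → ContinuousOn (fun t => φ t (cs j)) (Set.Icc (cs j) (cs (j + 1))) ∧
      ∀ t ∈ Set.Icc (cs j) (cs (j + 1)), ‖φ t (cs j)‖ ≤ 2 := by
    intro j hj
    refine piece_reg (hcsstep j) (hA.mono_set (hpieceSub j hj)) ?_ ?_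
    · intro t htm
      exact hφ (cs j) (hcsmem j hj.le) t (hpieceSub j hj htm)
    · have h := hsmall j hj
      simpa only [hcs, hwdef, Nat.cast_add, Nat.cast_one] using h
  have hcover : ∀ t ∈ Set.Icc tl tu, ∃ j, j < K ∧ t ∈ Set.Icc (cs j) (cs (j + 1)) := by
    intro t ht
    obtain ⟨j, hj, htj⟩ := uniform_cover hle hK ht
    refine ⟨j, hj, ?_⟩
    simpa only [hcs, hwdef, Nat.cast_add, Nat.cast_one] using htj
  have hbase : ∀ j, j ≤ K → ‖φ (cs j) tl‖ ≤ 2 ^ j := by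
    intro j
    induction j with
    | zero =>
      intro _
      rw [hcs0, hφid]
      simpa using (ContinuousLinearMap.norm_id_le : ‖ContinuousLinearMap.id ℝ E‖ ≤ 1)
    | succ j ih =>
      intro hj
      have hjK : j < K := by omega
      have h1 : ‖φ (cs (j + 1)) (cs j)‖ ≤ 2 :=
        (hpiece j hjK).2 _ ⟨hcsstep j, le_rfl⟩
      calc ‖φ (cs (j + 1)) tl‖ = ‖(φ (cs (j + 1)) (cs j)).comp (φ (cs j) tl)‖ := by rw [hφsg]
        _ ≤ ‖φ (cs (j + 1)) (cs j)‖ * ‖φ (cs j) tl‖ := ContinuousLinearMap.opNorm_comp_le _ _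
        _ ≤ 2 * 2 ^ j := mul_le_mul h1 (ih (by omega)) (norm_nonneg _) (by norm_num)
        _ = 2 ^ (j + 1) := by ring
  have hMf : ∀ t ∈ Set.Icc tl tu, ‖φ t tl‖ ≤ 2 ^ (K + 1) := by
    intro t ht
    obtain ⟨j, hj, htj⟩ := hcover t ht
    calc ‖φ t tl‖ = ‖(φ t (cs j)).comp (φ (cs j) tl)‖ := by rw [hφsg]
      _ ≤ ‖φ t (cs j)‖ * ‖φ (cs j) tl‖ := ContinuousLinearMap.opNorm_comp_le _ _
      _ ≤ 2 * 2 ^ j := mul_le_mul ((hpiece j hj).2 t htj) (hbase j hj.le) (norm_nonneg _)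
          (by norm_num)
      _ = 2 ^ (j + 1) := by ring
      _ ≤ 2 ^ (K + 1) := by
          apply pow_le_pow_right₀ (by norm_num)
          omega
  -- units and inverses
  have hunit : ∀ x y : ℝ, ∃ u : (E →L[ℝ] E)ˣ, (u : E →L[ℝ] E) = φ y x ∧
      ((u⁻¹ : (E →L[ℝ] E)ˣ) : E →L[ℝ] E) = φ x y := by
    intro x y
    refine ⟨⟨φ y x, φ x y, ?_, ?_⟩, rfl, rfl⟩
    · show φ y x * φ x y = 1
      rw [ContinuousLinearMap.mul_def, hφsg, hφid, ContinuousLinearMap.one_def]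
    · show φ x y * φ y x = 1
      rw [ContinuousLinearMap.mul_def, hφsg, hφid, ContinuousLinearMap.one_def]
  have hinv_eq : ∀ x y : ℝ, φ x y = Ring.inverse (φ y x) := by
    intro x y
    obtain ⟨u, hu1, hu2⟩ := hunit x y
    rw [← hu1, Ring.inverse_unit, hu2]
  have hinvcont : ∀ j, j < K →
      ContinuousOn (fun s => φ (cs j) s) (Set.Icc (cs j) (cs (j + 1))) := by
    intro j hj
    have h1 : ContinuousOn (fun s => Ring.inverse (φ s (cs j))) (Set.Icc (cs j) (cs (j + 1))) := by
      intro s hs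
      have hcu : ContinuousAt Ring.inverse (φ s (cs j)) := by
        obtain ⟨u, hu1, _⟩ := hunit (cs j) s
        rw [← hu1]
        exact NormedRing.inverse_continuousAt u
      exact ContinuousAt.comp_continuousWithinAt (g := Ring.inverse)
        (f := fun t => φ t (cs j)) hcu ((hpiece j hj).1 s hs)
    exact h1.congr fun s hs => hinv_eq (cs j) s
  have htlcont : ∀ j, j < K → ContinuousOn (fun s => φ tl s) (Set.Icc (cs j) (cs (j + 1))) := by
    intro j hj
    have h2 : ContinuousOn (fun s => (φ tl (cs j)).comp (φ (cs j) s))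
        (Set.Icc (cs j) (cs (j + 1))) := by
      have hcl : Continuous fun x : E →L[ℝ] E => (φ tl (cs j)).comp x :=
        (ContinuousLinearMap.compL ℝ E E E (φ tl (cs j))).continuous
      exact hcl.comp_continuousOn (hinvcont j hj)
    exact h2.congr fun s hs => (hφsg tl (cs j) s).symm
  have hCj : ∀ j : ℕ, ∃ C : ℝ, 0 ≤ C ∧
      (j < K → ∀ s ∈ Set.Icc (cs j) (cs (j + 1)), ‖φ tl s‖ ≤ C) := by
    intro j
    by_cases hj : j < K
    · obtain ⟨C, hC⟩ := isCompact_Icc.exists_bound_of_continuousOn (htlcont j hj)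
      exact ⟨max C 0, le_max_right _ _, fun _ s hs => (hC s hs).trans (le_max_left _ _)⟩
    · exact ⟨0, le_rfl, fun h => absurd h hj⟩
  choose C hC0 hCb using hCj
  set Mg : ℝ := ∑ j ∈ Finset.range K, C j with hMgdef
  have hCMg : ∀ j, j < K → C j ≤ Mg :=
    fun j hj => Finset.single_le_sum (fun i _ => hC0 i) (Finset.mem_range.mpr hj)
  have hMgb : ∀ s ∈ Set.Icc tl tu, ‖φ tl s‖ ≤ Mg := by
    intro s hs
    obtain ⟨j, hj, hsj⟩ := hcover s hs
    exact (hCb j hj s hsj).trans (hCMg j hj)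
  -- measurability
  have hmeas : AEStronglyMeasurable (fun s => φ tl s) (volume.restrict (Set.Icc tl tu)) := by
    set Sets : ℕ → Set ℝ := fun j => if j < K then Set.Icc (cs j) (cs (j + 1)) else ∅ with hSets
    have hunion : Set.Icc tl tu = ⋃ j : ℕ, Sets j := by
      apply Set.Subset.antisymm
      · intro t ht
        obtain ⟨j, hj, htj⟩ := hcover t ht
        exact Set.mem_iUnion.mpr ⟨j, by simp [hSets, hj, htj]⟩
      · intro t ht
        obtain ⟨j, htj⟩ := Set.mem_iUnion.mp ht
        by_cases hj : j < K
        · simp only [hSets, if_pos hj] at htj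
          exact hpieceSub j hj htj
        · simp [hSets, if_neg hj] at htj
    rw [hunion, aestronglyMeasurable_iUnion_iff]
    intro j
    by_cases hj : j < K
    · have : Sets j = Set.Icc (cs j) (cs (j + 1)) := by simp [hSets, hj]
      rw [this]
      exact (htlcont j hj).aestronglyMeasurable measurableSet_Icc
    · have : Sets j = ∅ := by simp [hSets, hj]
      rw [this]
      simp
  refine ⟨max (2 ^ (K + 1)) (max Mg 1), ?_, ?_, ?_, hmeas⟩
  · exact le_max_of_le_right (le_max_right _ _)
  · exact fun t ht => (hMf t ht).trans (le_max_left _ _)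
  · exact fun s hs => (hMgb s hs).trans (le_max_of_le_right (le_max_left _ _))
/-- The Hausdorff distance `d_H(Λᵢᴺ, R(tᵢ))` converges to `0` as `N → ∞`,
uniformly in `i ∈ {0,…,N}`. -/
theorem iterates_hausdorff_convergence {n m : ℕ} (tl tu : ℝ) (hle : tl ≤ tu)
    (A : ℝ → EuclideanSpace ℝ (Fin n) →L[ℝ] EuclideanSpace ℝ (Fin n))
    (hA : IntegrableOn A (Set.Icc tl tu))
    (B : ℝ → EuclideanSpace ℝ (Fin m) →L[ℝ] EuclideanSpace ℝ (Fin n))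
    (hBmeas : AEStronglyMeasurable B (volume.restrict (Set.Icc tl tu)))
    (p : ℝ≥0∞) (hp : 1 < p)
    (hBp : MemLp B p (volume.restrict (Set.Icc tl tu)))
    (X₀ : Set (EuclideanSpace ℝ (Fin n))) (U : Set (EuclideanSpace ℝ (Fin m)))
    (hX₀ne : X₀.Nonempty) (hX₀cp : IsCompact X₀) (hX₀cv : Convex ℝ X₀)
    (hUne : U.Nonempty) (hUcp : IsCompact U) (hUcv : Convex ℝ U)
    (φ : ℝ → ℝ → EuclideanSpace ℝ (Fin n) →L[ℝ] EuclideanSpace ℝ (Fin n))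
    (hφid : ∀ s : ℝ, φ s s = ContinuousLinearMap.id ℝ (EuclideanSpace ℝ (Fin n)))
    (hφsg : ∀ t z s : ℝ, (φ t z).comp (φ z s) = φ t s)
    (hφ : ∀ s ∈ Set.Icc tl tu, ∀ t ∈ Set.Icc tl tu,
      φ t s = ContinuousLinearMap.id ℝ (EuclideanSpace ℝ (Fin n))
        + ∫ z in s..t, (A z).comp (φ z s))
    (ti : ℕ → ℕ → ℝ) (hti : ∀ N i : ℕ, ti N i = tl + i * (tu - tl) / N)
    (Λ : ℕ → ℕ → Set (EuclideanSpace ℝ (Fin n)))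
    (hΛ0 : ∀ N : ℕ, 0 < N → Λ N 0 = X₀)
    (hΛ : ∀ N : ℕ, 0 < N → ∀ i : ℕ, 1 ≤ i → i ≤ N →
      Λ N i = (fun x => φ (ti N i) (ti N (i - 1)) x) '' Λ N (i - 1)
        + (fun u => (∫ s in ti N (i - 1)..ti N i, (φ (ti N i) s).comp (B s)) u) '' U) :
    ∀ ε : ℝ, 0 < ε → ∃ N₀ : ℕ, ∀ N : ℕ, N₀ ≤ N → 0 < N → ∀ i : ℕ, i ≤ N →
      Metric.hausdorffDist (Λ N i) (reachSet tl φ B X₀ U (ti N i)) < ε := by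
  classical
  intro ε hε
  haveI hIccfin : IsFiniteMeasure (volume.restrict (Set.Icc tl tu)) :=
    ⟨by rw [Measure.restrict_apply_univ]; exact measure_Icc_lt_top⟩
  obtain ⟨M, hM1, hMf, hMg, hgmeas⟩ := phi_reg hle hA hφid hφsg hφ
  have hM0 : 0 < M := lt_of_lt_of_le one_pos hM1
  set G : ℝ → EuclideanSpace ℝ (Fin m) →L[ℝ] EuclideanSpace ℝ (Fin n) :=
    fun s => (φ tl s).comp (B s) with hGdef
  have hBint : IntegrableOn B (Set.Icc tl tu) := hBp.integrable hp.le
  have hGmeas : AEStronglyMeasurable G (volume.restrict (Set.Icc tl tu)) :=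
    (isBoundedBilinearMap_comp (𝕜 := ℝ)).continuous.comp_aestronglyMeasurable
      (hgmeas.prodMk hBmeas)
  have hGint : IntegrableOn G (Set.Icc tl tu) := by
    refine Integrable.mono' (hBint.norm.const_mul M) hGmeas ?_
    refine (ae_restrict_iff' measurableSet_Icc).mpr (Filter.Eventually.of_forall ?_)
    intro s hs
    calc ‖(φ tl s).comp (B s)‖ ≤ ‖φ tl s‖ * ‖B s‖ := ContinuousLinearMap.opNorm_comp_le _ _
      _ ≤ M * ‖B s‖ := mul_le_mul_of_nonneg_right (hMg s hs) (norm_nonneg _)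
  obtain ⟨RU, hRU0, hRU⟩ : ∃ R : ℝ, 0 < R ∧ ∀ u ∈ U, ‖u‖ ≤ R := by
    obtain ⟨R, hR⟩ := hUcp.isBounded.exists_norm_le
    exact ⟨max R 1, lt_of_lt_of_le one_pos (le_max_right _ _),
      fun u hu => (hR u hu).trans (le_max_left _ _)⟩
  -- integrability of applications F s (v s)
  have hFvInt : ∀ F : ℝ → EuclideanSpace ℝ (Fin m) →L[ℝ] EuclideanSpace ℝ (Fin n),
      AEStronglyMeasurable F (volume.restrict (Set.Icc tl tu)) →
      IntegrableOn F (Set.Icc tl tu) →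
      ∀ v : ℝ → EuclideanSpace ℝ (Fin m),
      AEStronglyMeasurable v (volume.restrict (Set.Icc tl tu)) →
      ∀ C : ℝ, (∀ s, ‖v s‖ ≤ C) →
      IntegrableOn (fun s => F s (v s)) (Set.Icc tl tu) := by
    intro F hFm hFi v hvm C hvC
    have hm : AEStronglyMeasurable (fun s => F s (v s)) (volume.restrict (Set.Icc tl tu)) :=
      (isBoundedBilinearMap_apply (𝕜 := ℝ)).continuous.comp_aestronglyMeasurable
        (hFm.prodMk hvm)
    refine Integrable.mono' (hFi.norm.mul_const C) hm ?_
    refine Filter.Eventually.of_forall fun s => ?_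
    calc ‖F s (v s)‖ ≤ ‖F s‖ * ‖v s‖ := (F s).le_opNorm _
      _ ≤ ‖F s‖ * C := mul_le_mul_of_nonneg_left (hvC s) (norm_nonneg _)
  have hGIab : ∀ a b : ℝ, a ∈ Set.Icc tl tu → b ∈ Set.Icc tl tu →
      IntervalIntegrable G volume a b :=
    fun a b ha hb => (hGint.mono_set (Set.uIcc_subset_Icc ha hb)).intervalIntegrable
  have hGvIab : ∀ v : ℝ → EuclideanSpace ℝ (Fin m), Measurable v → (∀ s, v s ∈ U) →
      ∀ a b : ℝ, a ∈ Set.Icc tl tu → b ∈ Set.Icc tl tu →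
      IntervalIntegrable (fun s => G s (v s)) volume a b := by
    intro v hv hvU a b ha hb
    exact ((hFvInt G hGmeas hGint v hv.aestronglyMeasurable RU
      (fun s => hRU _ (hvU s))).mono_set (Set.uIcc_subset_Icc ha hb)).intervalIntegrable
  -- key operator identity
  have hkey : ∀ t ∈ Set.Icc tl tu, ∀ a ∈ Set.Icc tl tu, ∀ b ∈ Set.Icc tl tu,
      (∫ s in a..b, (φ t s).comp (B s)) = (φ t tl).comp (∫ s in a..b, G s) := by
    intro t ht a ha b hb
    have h1 : ∀ s : ℝ, (φ t s).comp (B s) = (ContinuousLinearMap.compL ℝ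
        (EuclideanSpace ℝ (Fin m)) (EuclideanSpace ℝ (Fin n)) (EuclideanSpace ℝ (Fin n))
        (φ t tl)) (G s) := by
      intro s
      rw [ContinuousLinearMap.compL_apply, hGdef, ← ContinuousLinearMap.comp_assoc, hφsg]
    calc (∫ s in a..b, (φ t s).comp (B s))
        = ∫ s in a..b, (ContinuousLinearMap.compL ℝ (EuclideanSpace ℝ (Fin m))
            (EuclideanSpace ℝ (Fin n)) (EuclideanSpace ℝ (Fin n)) (φ t tl)) (G s) :=
          intervalIntegral.integral_congr fun s _ => h1 s
      _ = (ContinuousLinearMap.compL ℝ (EuclideanSpace ℝ (Fin m)) (EuclideanSpace ℝ (Fin n))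
            (EuclideanSpace ℝ (Fin n)) (φ t tl)) (∫ s in a..b, G s) :=
          ContinuousLinearMap.intervalIntegral_comp_comm _ (hGIab a b ha hb)
      _ = (φ t tl).comp (∫ s in a..b, G s) := by rw [ContinuousLinearMap.compL_apply]
  have hkeyv : ∀ t ∈ Set.Icc tl tu, ∀ v : ℝ → EuclideanSpace ℝ (Fin m), Measurable v →
      (∀ s, v s ∈ U) → ∀ a ∈ Set.Icc tl tu, ∀ b ∈ Set.Icc tl tu,
      (∫ s in a..b, φ t s (B s (v s))) = φ t tl (∫ s in a..b, G s (v s)) := by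
    intro t ht v hv hvU a ha b hb
    have h1 : ∀ s : ℝ, φ t s (B s (v s)) = φ t tl (G s (v s)) := by
      intro s
      rw [← hφsg t tl s]
      rfl
    calc (∫ s in a..b, φ t s (B s (v s))) = ∫ s in a..b, φ t tl (G s (v s)) :=
          intervalIntegral.integral_congr fun s _ => h1 s
      _ = φ t tl (∫ s in a..b, G s (v s)) :=
          ContinuousLinearMap.intervalIntegral_comp_comm _ (hGvIab v hv hvU a b ha hb)
  -- reachSet characterization
  have hreach : ∀ t ∈ Set.Icc tl tu, reachSet tl φ B X₀ U t = {x | ∃ x₀ ∈ X₀,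
      ∃ u : ℝ → EuclideanSpace ℝ (Fin m), Measurable u ∧ (∀ s, u s ∈ U) ∧
      x = φ t tl (x₀ + ∫ s in tl..t, G s (u s))} := by
    intro t ht
    have htl : tl ∈ Set.Icc tl tu := ⟨le_rfl, hle⟩
    unfold reachSet
    ext x
    simp only [Set.mem_setOf_eq]
    constructor
    · rintro ⟨x₀, hx₀, u, hum, huU, rfl⟩
      refine ⟨x₀, hx₀, u, hum, huU, ?_⟩
      rw [map_add, ← hkeyv t ht u hum huU tl htl t ht]
    · rintro ⟨x₀, hx₀, u, hum, huU, rfl⟩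
      refine ⟨x₀, hx₀, u, hum, huU, ?_⟩
      rw [map_add, ← hkeyv t ht u hum huU tl htl t ht]
  -- approximation of G by a continuous function
  have hG'int : Integrable ((Set.Icc tl tu).indicator G) volume :=
    (integrable_indicator_iff (f := G) measurableSet_Icc).mpr hGint
  have hη0 : 0 < ε / (32 * M * RU) := by positivity
  obtain ⟨H, hHsupp, hHclose, hHcont, hHint⟩ :=
    hG'int.exists_hasCompactSupport_integral_sub_le hη0
  have hHuc : UniformContinuous H := hHsupp.uniformContinuous_of_continuous hHcont
  have hden : (0:ℝ) < 32 * M * RU * (tu - tl + 1) := by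
    have h1 : (0:ℝ) < tu - tl + 1 := by linarith
    positivity
  have hε'0 : 0 < ε / (32 * M * RU * (tu - tl + 1)) := div_pos hε hden
  obtain ⟨δ, hδ0, hδ⟩ := Metric.uniformContinuous_iff.mp hHuc _ hε'0
  refine ⟨⌈(tu - tl) / δ⌉₊ + 1, ?_⟩
  intro N hNN₀ hN i hiN
  set h := (tu - tl) / N with hhdef
  have hN0 : (0:ℝ) < N := by exact_mod_cast hN
  have hh0 : 0 ≤ h := div_nonneg (by linarith) hN0.le
  have hNh : (N:ℝ) * h = tu - tl := by rw [hhdef]; field_simp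
  have hhδ : h < δ := by
    have h1 : (tu - tl) / δ ≤ (⌈(tu - tl) / δ⌉₊ : ℝ) := Nat.le_ceil _
    have h2 : ((⌈(tu - tl) / δ⌉₊ + 1 : ℕ) : ℝ) ≤ (N : ℝ) := by exact_mod_cast hNN₀
    have h3 : (tu - tl) / δ < (N:ℝ) := by push_cast at h2; linarith
    rw [hhdef, div_lt_iff₀ hN0]
    have := (div_lt_iff₀ hδ0).mp h3
    linarith [mul_comm δ (N:ℝ), this]
  have hti' : ∀ j : ℕ, ti N j = tl + j * h := by
    intro j
    rw [hti, hhdef]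
    ring
  have hti0 : ti N 0 = tl := by rw [hti']; simp
  have htistep : ∀ j : ℕ, ti N (j + 1) = ti N j + h := by
    intro j
    rw [hti', hti']
    push_cast
    ring
  have htimem : ∀ j : ℕ, j ≤ N → ti N j ∈ Set.Icc tl tu := by
    intro j hj
    rw [hti']
    constructor
    · nlinarith [Nat.cast_nonneg (α := ℝ) j]
    · have hjN : (j:ℝ) ≤ N := by exact_mod_cast hj
      nlinarith
  have htile : ∀ j : ℕ, ti N j ≤ ti N (j + 1) := by
    intro j
    rw [htistep]
    linarith
  -- characterization of the iterates
  have char : ∀ i : ℕ, i ≤ N → Λ N i = {y | ∃ x₀ ∈ X₀,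
      ∃ w' : ℕ → EuclideanSpace ℝ (Fin m), (∀ j, w' j ∈ U) ∧
      y = φ (ti N i) tl (x₀ + ∑ j ∈ Finset.range i,
        (∫ s in ti N j..ti N (j + 1), G s) (w' (j + 1)))} := by
    intro i
    induction i with
    | zero =>
      intro _
      rw [hΛ0 N hN]
      ext y
      simp only [Set.mem_setOf_eq, Finset.range_zero, Finset.sum_empty, add_zero, hti0, hφid,
        ContinuousLinearMap.id_apply]
      constructor
      · intro hy
        exact ⟨y, hy, fun _ => hUne.choose, fun _ => hUne.choose_spec, rfl⟩
      · rintro ⟨x₀, hx₀, w', hw', rfl⟩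
        exact hx₀
    | succ i ih =>
      intro hi1
      have hiN' : i ≤ N := Nat.le_of_succ_le hi1
      have hrec := hΛ N hN (i + 1) (Nat.le_add_left 1 i) hi1
      simp only [Nat.add_sub_cancel] at hrec
      rw [hrec, ih hiN']
      have hmem_i := htimem i hiN'
      have hmem_i1 := htimem (i + 1) hi1
      have hopid := hkey (ti N (i + 1)) hmem_i1 (ti N i) hmem_i (ti N (i + 1)) hmem_i1
      ext y
      constructor
      · intro hy
        rw [Set.mem_add] at hy
        obtain ⟨a, ha, b, hb, hab⟩ := hy
        obtain ⟨ya, hya, rfl⟩ := ha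
        obtain ⟨x₀, hx₀, w', hw', rfl⟩ := hya
        obtain ⟨u', hu', rfl⟩ := hb
        subst hab
        refine ⟨x₀, hx₀, Function.update w' (i + 1) u', ?_, ?_⟩
        · intro j
          rcases eq_or_ne j (i + 1) with rfl | hj
          · rw [Function.update_self]; exact hu'
          · rw [Function.update_of_ne hj]; exact hw' j
        have h1 : (fun x => φ (ti N (i + 1)) (ti N i) x)
            (φ (ti N i) tl (x₀ + ∑ j ∈ Finset.range i,
              (∫ s in ti N j..ti N (j + 1), G s) (w' (j + 1))))
            = φ (ti N (i + 1)) tl (x₀ + ∑ j ∈ Finset.range i,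
              (∫ s in ti N j..ti N (j + 1), G s) (w' (j + 1))) := by
          show φ (ti N (i + 1)) (ti N i) (φ (ti N i) tl _) = _
          rw [← ContinuousLinearMap.comp_apply, hφsg]
        have h2 : (fun u => (∫ s in ti N i..ti N (i + 1),
              (φ (ti N (i + 1)) s).comp (B s)) u) u'
            = φ (ti N (i + 1)) tl ((∫ s in ti N i..ti N (i + 1), G s) u') := by
          show (∫ s in ti N i..ti N (i + 1), (φ (ti N (i + 1)) s).comp (B s)) u' = _
          rw [hopid, ContinuousLinearMap.comp_apply]
        rw [h1, h2, ← map_add]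
        congr 1
        rw [Finset.sum_range_succ, Function.update_self, add_assoc]
        congr 2
        apply Finset.sum_congr rfl
        intro j hj
        rw [Function.update_of_ne (by have := Finset.mem_range.mp hj; omega)]
      · rintro ⟨x₀, hx₀, w', hw', rfl⟩
        rw [Set.mem_add]
        refine ⟨φ (ti N (i + 1)) (ti N i) (φ (ti N i) tl (x₀ + ∑ j ∈ Finset.range i,
            (∫ s in ti N j..ti N (j + 1), G s) (w' (j + 1)))),
          Set.mem_image_of_mem _ ⟨x₀, hx₀, w', hw', rfl⟩,
          (∫ s in ti N i..ti N (i + 1), (φ (ti N (i + 1)) s).comp (B s)) (w' (i + 1)),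
          Set.mem_image_of_mem _ (hw' (i + 1)), ?_⟩
        rw [← ContinuousLinearMap.comp_apply, hφsg, hopid, ContinuousLinearMap.comp_apply,
          ← map_add, Finset.sum_range_succ, add_assoc]
    -- splitting integrals over the partition
  have hsplitgen : ∀ v : ℝ → EuclideanSpace ℝ (Fin m), Measurable v → (∀ s, v s ∈ U) →
      (∫ s in tl..ti N i, G s (v s))
        = ∑ j ∈ Finset.range i, ∫ s in ti N j..ti N (j + 1), G s (v s) := by
    intro v hv hvU
    have hints : ∀ k < i, IntervalIntegrable (fun s => G s (v s)) volume (ti N k) (ti N (k + 1)) :=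
      fun k hk => hGvIab v hv hvU _ _ (htimem k (le_of_lt (lt_of_lt_of_le hk hiN)))
        (htimem (k + 1) (Nat.succ_le_of_lt (lt_of_lt_of_le hk hiN)))
    rw [intervalIntegral.sum_integral_adjacent_intervals hints, hti0]
  -- Λ N i ⊆ reachSet
  have hΛsub : Λ N i ⊆ reachSet tl φ B X₀ U (ti N i) := by
    rw [char i hiN, hreach (ti N i) (htimem i hiN)]
    rintro y ⟨x₀, hx₀, w', hw', rfl⟩
    set u : ℝ → EuclideanSpace ℝ (Fin m) := fun s => w' (⌊(s - tl) / h⌋₊ + 1) with hudef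
    have hum : Measurable u := by
      have hfloor : Measurable fun s : ℝ => ⌊(s - tl) / h⌋₊ + 1 :=
        (Nat.measurable_floor.comp ((measurable_id.sub_const tl).div_const h)).add
          measurable_const
      exact measurable_from_top.comp hfloor
    have huU : ∀ s, u s ∈ U := fun s => hw' _
    refine ⟨x₀, hx₀, u, hum, huU, ?_⟩
    have hpiecewise : ∀ j, j < i → (∫ s in ti N j..ti N (j + 1), G s (u s))
        = (∫ s in ti N j..ti N (j + 1), G s) (w' (j + 1)) := by
      intro j hj
      have hjN : j ≤ N := le_of_lt (lt_of_lt_of_le hj hiN)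
      have hj1N : j + 1 ≤ N := Nat.succ_le_of_lt (lt_of_lt_of_le hj hiN)
      rw [ContinuousLinearMap.intervalIntegral_apply (hGIab _ _ (htimem j hjN)
        (htimem (j + 1) hj1N)) (w' (j + 1))]
      apply intervalIntegral.integral_congr_ae
      have hnull : (volume : Measure ℝ) {ti N (j + 1)} = 0 := Real.volume_singleton
      filter_upwards [compl_mem_ae_iff.mpr hnull] with s hs hsIoc
      have hIoc : s ∈ Set.Ioc (ti N j) (ti N (j + 1)) := by
        rwa [Set.uIoc_of_le (htile j)] at hsIoc
      have hslt : s < ti N (j + 1) := lt_of_le_of_ne hIoc.2 hs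
      have hhpos : 0 < h := by
        rcases lt_or_eq_of_le hh0 with h' | h'
        · exact h'
        · exfalso
          have heq2 : ti N (j + 1) = ti N j := by rw [htistep, ← h', add_zero]
          rw [heq2] at hslt
          exact absurd hIoc.1 (not_lt.mpr hslt.le)
      have hfloor : ⌊(s - tl) / h⌋₊ = j := by
        have hlow : (j : ℝ) ≤ (s - tl) / h := by
          rw [le_div_iff₀ hhpos]
          have h1 := hIoc.1
          rw [hti'] at h1
          linarith
        have hhigh : (s - tl) / h < (j : ℝ) + 1 := by
          rw [div_lt_iff₀ hhpos]
          rw [hti'] at hslt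
          push_cast at hslt ⊢
          linarith
        rw [Nat.floor_eq_iff (le_trans (Nat.cast_nonneg j) hlow)]
        exact ⟨hlow, by exact_mod_cast hhigh⟩
      show G s (u s) = G s (w' (j + 1))
      rw [hudef]
      simp only [hfloor]
    rw [hsplitgen u hum huU]
    congr 1
    congr 1
    exact Finset.sum_congr rfl fun j hj => (hpiecewise j (Finset.mem_range.mp hj)).symm
  -- reachSet ⊆ ε/2-neighbourhood of Λ N i
  have hRsub : ∀ x ∈ reachSet tl φ B X₀ U (ti N i), ∃ y ∈ Λ N i, dist x y ≤ ε / 2 := by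
    intro x hx
    rw [hreach (ti N i) (htimem i hiN)] at hx
    obtain ⟨x₀, hx₀, u, hum, huU, rfl⟩ := hx
    have huInt : IntegrableOn u (Set.Icc tl tu) := by
      refine Integrable.mono' (integrable_const RU) hum.aestronglyMeasurable ?_
      exact Filter.Eventually.of_forall fun s => hRU _ (huU s)
    set ubar : ℕ → EuclideanSpace ℝ (Fin m) := fun k => match k with
      | 0 => hUne.choose
      | (j + 1) => if 0 < h then h⁻¹ • ∫ s in ti N j..ti N (j + 1), u s else hUne.choose
      with hubar
    have hubarU : ∀ k, ubar k ∈ U := by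
      intro k
      match k with
      | 0 => exact hUne.choose_spec
      | (j + 1) =>
        by_cases hh : 0 < h
        · have hueq : ubar (j + 1) = ⨍ s in Set.Ioc (ti N j) (ti N (j + 1)), u s := by
            rw [setAverage_eq]
            have hvol : volume (Set.Ioc (ti N j) (ti N (j + 1))) = ENNReal.ofReal h := by
              rw [Real.volume_Ioc, htistep]
              congr 1
              ring
            rw [measureReal_def, hvol, ENNReal.toReal_ofReal hh0]
            show (if 0 < h then h⁻¹ • ∫ s in ti N j..ti N (j + 1), u s else hUne.choose) = _
            rw [if_pos hh, intervalIntegral.integral_of_le (htile j)]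
          rw [hueq]
          refine hUcv.set_average_mem hUcp.isClosed ?_ measure_Ioc_lt_top.ne
            (Filter.Eventually.of_forall fun s => huU s) ?_
          · rw [Real.volume_Ioc, htistep, add_sub_cancel_left, Ne, ENNReal.ofReal_eq_zero]
            exact not_le.mpr hh
          · haveI : IsFiniteMeasure (volume.restrict (Set.Ioc (ti N j) (ti N (j + 1)))) :=
              ⟨by rw [Measure.restrict_apply_univ]; exact measure_Ioc_lt_top⟩
            refine Integrable.mono' (integrable_const RU) hum.aestronglyMeasurable ?_
            exact Filter.Eventually.of_forall fun s => hRU _ (huU s)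
        · show (if 0 < h then h⁻¹ • ∫ s in ti N j..ti N (j + 1), u s else hUne.choose) ∈ U
          rw [if_neg hh]
          exact hUne.choose_spec
    refine ⟨φ (ti N i) tl (x₀ + ∑ j ∈ Finset.range i,
        (∫ s in ti N j..ti N (j + 1), G s) (ubar (j + 1))), ?_, ?_⟩
    · rw [char i hiN]
      exact ⟨x₀, hx₀, ubar, hubarU, rfl⟩
    -- the distance estimate
    set ε' : ℝ := ε / (32 * M * RU * (tu - tl + 1)) with hε'def
    set η : ℝ := ε / (32 * M * RU) with hηdef
    set P : EuclideanSpace ℝ (Fin n) := ∫ s in tl..ti N i, G s (u s) with hPdef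
    set Q : EuclideanSpace ℝ (Fin n) := ∑ j ∈ Finset.range i,
      (∫ s in ti N j..ti N (j + 1), G s) (ubar (j + 1)) with hQdef
    have hdisteq : dist (φ (ti N i) tl (x₀ + P)) (φ (ti N i) tl (x₀ + Q))
        = ‖φ (ti N i) tl (P - Q)‖ := by
      rw [dist_eq_norm, ← map_sub]
      congr 2
      abel
    rw [hdisteq]
    -- auxiliary integrability facts
    have hHOn : IntegrableOn H (Set.Icc tl tu) := hHint.integrableOn
    have hHmeas : AEStronglyMeasurable H (volume.restrict (Set.Icc tl tu)) :=
      hHcont.aestronglyMeasurable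
    have hGHint : IntegrableOn (fun s => G s - H s) (Set.Icc tl tu) := hGint.sub hHOn
    have hGHmeas : AEStronglyMeasurable (fun s => G s - H s)
        (volume.restrict (Set.Icc tl tu)) := hGmeas.sub hHmeas
    -- per-piece estimate
    have hdj : ∀ j, j < i →
        ‖(∫ s in ti N j..ti N (j + 1), G s (u s))
          - (∫ s in ti N j..ti N (j + 1), G s) (ubar (j + 1))‖
        ≤ (∫ s in ti N j..ti N (j + 1), ‖G s - H s‖ * (2 * RU)) + ε' * (2 * RU) * h := by
      intro j hj
      have hjN : j ≤ N := le_of_lt (lt_of_lt_of_le hj hiN)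
      have hj1N : j + 1 ≤ N := Nat.succ_le_of_lt (lt_of_lt_of_le hj hiN)
      have hma := htimem j hjN
      have hmb := htimem (j + 1) hj1N
      have hab : ti N j ≤ ti N (j + 1) := htile j
      have hba : ti N (j + 1) - ti N j = h := by rw [htistep]; ring
      set a := ti N j
      set b := ti N (j + 1)
      set v : ℝ → EuclideanSpace ℝ (Fin m) := fun s => u s - ubar (j + 1) with hvdef
      have hvm : Measurable v := hum.sub measurable_const
      have hvb : ∀ s, ‖v s‖ ≤ 2 * RU := by
        intro s
        calc ‖u s - ubar (j + 1)‖ ≤ ‖u s‖ + ‖ubar (j + 1)‖ := norm_sub_le _ _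
          _ ≤ RU + RU := add_le_add (hRU _ (huU s)) (hRU _ (hubarU (j + 1)))
          _ = 2 * RU := by ring
      have hvIab : IntervalIntegrable v volume a b := by
        have : IntegrableOn v (Set.Icc tl tu) := by
          refine Integrable.mono' (integrable_const (2 * RU)) hvm.aestronglyMeasurable ?_
          exact Filter.Eventually.of_forall hvb
        exact (this.mono_set (Set.uIcc_subset_Icc hma hmb)).intervalIntegrable
      have I1 : IntervalIntegrable (fun s => (G s - H s) (v s)) volume a b :=
        ((hFvInt _ hGHmeas hGHint v hvm.aestronglyMeasurable (2 * RU) hvb).mono_set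
          (Set.uIcc_subset_Icc hma hmb)).intervalIntegrable
      have hHaint : IntegrableOn (fun s => H s - H a) (Set.Icc tl tu) :=
        hHOn.sub (integrableOn_const (C := H a) measure_Icc_lt_top.ne)
      have hHameas : AEStronglyMeasurable (fun s => H s - H a)
          (volume.restrict (Set.Icc tl tu)) := hHmeas.sub aestronglyMeasurable_const
      have I2 : IntervalIntegrable (fun s => (H s - H a) (v s)) volume a b :=
        ((hFvInt _ hHameas hHaint v hvm.aestronglyMeasurable (2 * RU) hvb).mono_set
          (Set.uIcc_subset_Icc hma hmb)).intervalIntegrable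
      have I3 : IntervalIntegrable (fun s => (H a) (v s)) volume a b := by
        have hcm : AEStronglyMeasurable (fun _ : ℝ => H a)
            (volume.restrict (Set.Icc tl tu)) := aestronglyMeasurable_const
        exact ((hFvInt _ hcm (integrableOn_const (C := H a) measure_Icc_lt_top.ne) v
          hvm.aestronglyMeasurable (2 * RU) hvb).mono_set
          (Set.uIcc_subset_Icc hma hmb)).intervalIntegrable
      have hGuIab : IntervalIntegrable (fun s => G s (u s)) volume a b :=
        hGvIab u hum huU a b hma hmb
      have hGubarIab : IntervalIntegrable (fun s => G s (ubar (j + 1))) volume a b := by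
        have hcm : Measurable (fun _ : ℝ => ubar (j + 1)) := measurable_const
        exact ((hFvInt G hGmeas hGint _ hcm.aestronglyMeasurable RU
          (fun _ => hRU _ (hubarU (j + 1)))).mono_set
          (Set.uIcc_subset_Icc hma hmb)).intervalIntegrable
      have e1 : (∫ s in a..b, G s) (ubar (j + 1)) = ∫ s in a..b, G s (ubar (j + 1)) :=
        ContinuousLinearMap.intervalIntegral_apply (hGIab a b hma hmb) _
      have hzero : (∫ s in a..b, v s) = 0 := by
        have hv1 : (∫ s in a..b, v s) = (∫ s in a..b, u s) - (b - a) • ubar (j + 1) := by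
          rw [hvdef]
          rw [intervalIntegral.integral_sub ((huInt.mono_set
            (Set.uIcc_subset_Icc hma hmb)).intervalIntegrable) intervalIntegrable_const,
            intervalIntegral.integral_const]
        rw [hv1, hba]
        by_cases hh : 0 < h
        · have hub : ubar (j + 1) = h⁻¹ • ∫ s in a..b, u s := by
            show (if 0 < h then h⁻¹ • ∫ s in ti N j..ti N (j + 1), u s else hUne.choose) = _
            rw [if_pos hh]
          rw [hub, smul_smul, mul_inv_cancel₀ (ne_of_gt hh), one_smul, sub_self]
        · have hh0' : h = 0 := le_antisymm (not_lt.mp hh) hh0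
          have hbaeq : b = a := by
            show ti N (j + 1) = ti N j
            rw [htistep, hh0', add_zero]
          rw [hh0', zero_smul, sub_zero, hbaeq, intervalIntegral.integral_same]
      have hdecomp : (∫ s in a..b, G s (u s)) - (∫ s in a..b, G s (ubar (j + 1)))
          = (∫ s in a..b, (G s - H s) (v s)) + (∫ s in a..b, (H s - H a) (v s)) := by
        have hHa0 : (∫ s in a..b, (H a) (v s)) = 0 := by
          rw [ContinuousLinearMap.intervalIntegral_comp_comm _ hvIab, hzero, map_zero]
        calc (∫ s in a..b, G s (u s)) - (∫ s in a..b, G s (ubar (j + 1)))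
            = ∫ s in a..b, (G s (u s) - G s (ubar (j + 1))) :=
              (intervalIntegral.integral_sub hGuIab hGubarIab).symm
          _ = ∫ s in a..b, ((G s - H s) (v s) + (H s - H a) (v s) + (H a) (v s)) := by
              apply intervalIntegral.integral_congr
              intro s _
              simp only [ContinuousLinearMap.sub_apply, hvdef, map_sub]
              abel
          _ = (∫ s in a..b, ((G s - H s) (v s) + (H s - H a) (v s)))
              + ∫ s in a..b, (H a) (v s) := intervalIntegral.integral_add (I1.add I2) I3
          _ = (∫ s in a..b, (G s - H s) (v s)) + (∫ s in a..b, (H s - H a) (v s)) := by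
              rw [hHa0, add_zero, intervalIntegral.integral_add I1 I2]
      rw [e1, hdecomp]
      have b1 : ‖∫ s in a..b, (G s - H s) (v s)‖
          ≤ ∫ s in a..b, ‖G s - H s‖ * (2 * RU) := by
        calc ‖∫ s in a..b, (G s - H s) (v s)‖ ≤ ∫ s in a..b, ‖(G s - H s) (v s)‖ :=
              intervalIntegral.norm_integral_le_integral_norm hab
          _ ≤ ∫ s in a..b, ‖G s - H s‖ * (2 * RU) := by
              refine intervalIntegral.integral_mono_on hab I1.norm ?_ ?_
              · exact (IntegrableOn.mono_set (hGHint.norm.mul_const (2 * RU))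
                  (Set.uIcc_subset_Icc hma hmb)).intervalIntegrable
              · intro s _
                calc ‖(G s - H s) (v s)‖ ≤ ‖G s - H s‖ * ‖v s‖ := (G s - H s).le_opNorm _
                  _ ≤ ‖G s - H s‖ * (2 * RU) :=
                    mul_le_mul_of_nonneg_left (hvb s) (norm_nonneg _)
      have b2 : ‖∫ s in a..b, (H s - H a) (v s)‖ ≤ ε' * (2 * RU) * h := by
        calc ‖∫ s in a..b, (H s - H a) (v s)‖ ≤ ∫ s in a..b, ‖(H s - H a) (v s)‖ :=
              intervalIntegral.norm_integral_le_integral_norm hab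
          _ ≤ ∫ s in a..b, ε' * (2 * RU) := by
              refine intervalIntegral.integral_mono_on hab I2.norm
                intervalIntegrable_const ?_
              intro s hs
              have hdsa : dist s a < δ := by
                rw [Real.dist_eq, abs_of_nonneg (by linarith [hs.1])]
                have := hs.2
                linarith [hba, hs.1, hhδ, hs.2]
              have hH : ‖H s - H a‖ ≤ ε' := le_of_lt (by
                have := hδ hdsa
                rwa [dist_eq_norm] at this)
              calc ‖(H s - H a) (v s)‖ ≤ ‖H s - H a‖ * ‖v s‖ := (H s - H a).le_opNorm _
                _ ≤ ε' * (2 * RU) := mul_le_mul hH (hvb s) (norm_nonneg _)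
                    (le_of_lt hε'0)
          _ = ε' * (2 * RU) * h := by
              rw [intervalIntegral.integral_const, hba, smul_eq_mul]
              ring
      calc ‖(∫ s in a..b, (G s - H s) (v s)) + ∫ s in a..b, (H s - H a) (v s)‖
          ≤ ‖∫ s in a..b, (G s - H s) (v s)‖ + ‖∫ s in a..b, (H s - H a) (v s)‖ :=
            norm_add_le _ _
        _ ≤ (∫ s in a..b, ‖G s - H s‖ * (2 * RU)) + ε' * (2 * RU) * h :=
            add_le_add b1 b2
    -- sum the per-piece estimates
    have hPQ : P - Q = ∑ j ∈ Finset.range i, ((∫ s in ti N j..ti N (j + 1), G s (u s))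
        - (∫ s in ti N j..ti N (j + 1), G s) (ubar (j + 1))) := by
      rw [hPdef, hQdef, hsplitgen u hum huU, ← Finset.sum_sub_distrib]
    have hGHsum : (∑ j ∈ Finset.range i, ∫ s in ti N j..ti N (j + 1), ‖G s - H s‖ * (2 * RU))
        ≤ 2 * RU * η := by
      have hintk : ∀ k < i, IntervalIntegrable (fun s => ‖G s - H s‖ * (2 * RU)) volume
          (ti N k) (ti N (k + 1)) := by
        intro k hk
        exact (IntegrableOn.mono_set (hGHint.norm.mul_const (2 * RU)) (Set.uIcc_subset_Icc
          (htimem k (le_of_lt (lt_of_lt_of_le hk hiN)))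
          (htimem (k + 1) (Nat.succ_le_of_lt (lt_of_lt_of_le hk hiN))))).intervalIntegrable
      rw [intervalIntegral.sum_integral_adjacent_intervals hintk, hti0]
      have htiIcc := htimem i hiN
      rw [intervalIntegral.integral_of_le htiIcc.1]
      have hsss : Set.Ioc tl (ti N i) ⊆ Set.Icc tl tu :=
        fun s hs => ⟨le_of_lt hs.1, le_trans hs.2 htiIcc.2⟩
      have hindeq : ∀ s ∈ Set.Ioc tl (ti N i),
          ‖G s - H s‖ * (2 * RU) = ‖(Set.Icc tl tu).indicator G s - H s‖ * (2 * RU) := by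
        intro s hs
        rw [Set.indicator_of_mem (hsss hs)]
      rw [setIntegral_congr_fun measurableSet_Ioc hindeq]
      have hIint : Integrable (fun s => ‖(Set.Icc tl tu).indicator G s - H s‖ * (2 * RU))
          volume := (hG'int.sub hHint).norm.mul_const _
      calc (∫ s in Set.Ioc tl (ti N i), ‖(Set.Icc tl tu).indicator G s - H s‖ * (2 * RU))
          ≤ ∫ s, ‖(Set.Icc tl tu).indicator G s - H s‖ * (2 * RU) := by
            refine setIntegral_le_integral hIint ?_
            exact Filter.Eventually.of_forall fun s => by positivity
        _ = (∫ s, ‖(Set.Icc tl tu).indicator G s - H s‖) * (2 * RU) := by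
            rw [MeasureTheory.integral_mul_const]
        _ ≤ η * (2 * RU) := by
            refine mul_le_mul_of_nonneg_right ?_ (by positivity)
            exact hHclose
        _ = 2 * RU * η := by ring
    have hih : (i : ℝ) * h ≤ tu - tl := by
      have : (i : ℝ) ≤ N := by exact_mod_cast hiN
      nlinarith
    have hDbound : ‖P - Q‖ ≤ 2 * RU * η + ε' * (2 * RU) * (tu - tl) := by
      rw [hPQ]
      calc ‖∑ j ∈ Finset.range i, ((∫ s in ti N j..ti N (j + 1), G s (u s))
            - (∫ s in ti N j..ti N (j + 1), G s) (ubar (j + 1)))‖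
          ≤ ∑ j ∈ Finset.range i, ‖(∫ s in ti N j..ti N (j + 1), G s (u s))
            - (∫ s in ti N j..ti N (j + 1), G s) (ubar (j + 1))‖ := norm_sum_le _ _
        _ ≤ ∑ j ∈ Finset.range i, ((∫ s in ti N j..ti N (j + 1), ‖G s - H s‖ * (2 * RU))
            + ε' * (2 * RU) * h) :=
            Finset.sum_le_sum fun j hj => hdj j (Finset.mem_range.mp hj)
        _ = (∑ j ∈ Finset.range i, ∫ s in ti N j..ti N (j + 1), ‖G s - H s‖ * (2 * RU))
            + i * (ε' * (2 * RU) * h) := by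
            rw [Finset.sum_add_distrib, Finset.sum_const, Finset.card_range, nsmul_eq_mul]
        _ ≤ 2 * RU * η + ε' * (2 * RU) * (tu - tl) := by
            refine add_le_add hGHsum ?_
            have : (i : ℝ) * (ε' * (2 * RU) * h) = ε' * (2 * RU) * ((i : ℝ) * h) := by ring
            rw [this]
            exact mul_le_mul_of_nonneg_left hih (by positivity)
    have hMne : M ≠ 0 := ne_of_gt hM0
    have hRUne : RU ≠ 0 := ne_of_gt hRU0
    have htt1 : (0:ℝ) < tu - tl + 1 := by linarith
    have htt1ne : tu - tl + 1 ≠ 0 := ne_of_gt htt1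
    have harith : M * (2 * RU * η + ε' * (2 * RU) * (tu - tl)) ≤ ε / 2 := by
      have e1 : M * (2 * RU * η) = ε / 16 := by
        rw [hηdef]
        field_simp
        ring
      have e3 : M * (ε' * (2 * RU) * (tu - tl + 1)) = ε / 16 := by
        rw [hε'def]
        field_simp
        ring
      have hnn : 0 ≤ M * (ε' * (2 * RU)) :=
        le_of_lt (mul_pos hM0 (mul_pos hε'0 (by linarith)))
      have e2 : M * (ε' * (2 * RU) * (tu - tl)) ≤ ε / 16 := by
        calc M * (ε' * (2 * RU) * (tu - tl)) = (M * (ε' * (2 * RU))) * (tu - tl) := by ring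
          _ ≤ (M * (ε' * (2 * RU))) * (tu - tl + 1) :=
            mul_le_mul_of_nonneg_left (by linarith) hnn
          _ = M * (ε' * (2 * RU) * (tu - tl + 1)) := by ring
          _ = ε / 16 := e3
      calc M * (2 * RU * η + ε' * (2 * RU) * (tu - tl))
          = M * (2 * RU * η) + M * (ε' * (2 * RU) * (tu - tl)) := by ring
        _ ≤ ε / 16 + ε / 16 := add_le_add (le_of_eq e1) e2
        _ ≤ ε / 2 := by linarith
    calc ‖φ (ti N i) tl (P - Q)‖ ≤ ‖φ (ti N i) tl‖ * ‖P - Q‖ :=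
          (φ (ti N i) tl).le_opNorm _
      _ ≤ M * (2 * RU * η + ε' * (2 * RU) * (tu - tl)) := by
          refine mul_le_mul (hMf _ (htimem i hiN)) hDbound (norm_nonneg _) (by linarith)
      _ ≤ ε / 2 := harith
  -- conclusion
  have hmain : Metric.hausdorffDist (Λ N i) (reachSet tl φ B X₀ U (ti N i)) ≤ ε / 2 := by
    apply Metric.hausdorffDist_le_of_mem_dist (by positivity)
    · intro x hx
      refine ⟨x, hΛsub hx, ?_⟩
      rw [dist_self]
      positivity
    · intro x hx
      exact hRsub x hx
  linarith [hmain]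
end

section
/- Let {Λᵢ}_{i=0}^{N} be nonempty compact subsets of ℝ^n with Λᵢ ⊆ R(tᵢ), where t₀ ≤ t₁ ≤ … ≤ t_N partition [t̲,t̄]. Then d_H(⋃_{i=0}^{N} Λᵢ, ⋃_{t∈[t̲,t̄]} R(t)) ≤ max_{i∈{0,…,N−1}} sup_{t∈[tᵢ,tᵢ₊₁]} d_H(R(t), Λᵢ), where R : [t̲,t̄] → compact subsets of ℝ^n is continuous in Hausdorff distance. -/
open MeasureTheory

/-- If `Λᵢ ⊆ R(tᵢ)` are nonempty compact sets over a partition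
`t̲ = t₀ ≤ … ≤ t_N = t̄` and `R` is Hausdorff-continuous with nonempty compact values,
then `d_H(⋃ᵢ Λᵢ, ⋃_{t∈[t̲,t̄]} R(t)) ≤ max_i sup_{t∈[tᵢ,tᵢ₊₁]} d_H(R(t), Λᵢ)`. -/
theorem hausdorff_dist_union_le {n : ℕ} (tl tu : ℝ) (hle : tl ≤ tu)
    (N : ℕ) (hN : 1 ≤ N) (t : ℕ → ℝ)
    (ht0 : t 0 = tl) (htN : t N = tu)
    (htmono : ∀ i j : ℕ, i ≤ j → j ≤ N → t i ≤ t j)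
    (R : ℝ → Set (EuclideanSpace ℝ (Fin n)))
    (hRne : ∀ u ∈ Set.Icc tl tu, (R u).Nonempty)
    (hRcp : ∀ u ∈ Set.Icc tl tu, IsCompact (R u))
    (hRcont : ∀ ε : ℝ, 0 < ε → ∀ u ∈ Set.Icc tl tu, ∃ δ : ℝ, 0 < δ ∧
      ∀ v ∈ Set.Icc tl tu, |v - u| < δ → Metric.hausdorffDist (R v) (R u) < ε)
    (Λ : ℕ → Set (EuclideanSpace ℝ (Fin n)))
    (hΛne : ∀ i : ℕ, i ≤ N → (Λ i).Nonempty)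
    (hΛcp : ∀ i : ℕ, i ≤ N → IsCompact (Λ i))
    (hΛsub : ∀ i : ℕ, i ≤ N → Λ i ⊆ R (t i)) :
    ∀ C : ℝ, (∀ i : ℕ, i < N → ∀ u ∈ Set.Icc (t i) (t (i + 1)),
        Metric.hausdorffDist (R u) (Λ i) ≤ C) →
      Metric.hausdorffDist (⋃ i ∈ Finset.range (N + 1), Λ i)
        (⋃ u ∈ Set.Icc tl tu, R u) ≤ C := by
  intro C hC
  have htmem : ∀ i : ℕ, i ≤ N → t i ∈ Set.Icc tl tu := by
    intro i hi
    constructor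
    · rw [← ht0]; exact htmono 0 i (Nat.zero_le _) hi
    · rw [← htN]; exact htmono i N hi le_rfl
  have hC0 : 0 ≤ C := by
    have := hC 0 hN (t 0) ⟨le_rfl, htmono 0 1 (by omega) hN⟩
    exact le_trans Metric.hausdorffDist_nonneg this
  apply Metric.hausdorffDist_le_of_infDist hC0
  · -- x in some Λ i lies in the big union
    intro x hx
    simp only [Set.mem_iUnion, Finset.mem_range] at hx
    obtain ⟨i, hi, hxi⟩ := hx
    have hiN : i ≤ N := by omega
    have hxB : x ∈ ⋃ u ∈ Set.Icc tl tu, R u := by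
      refine Set.mem_iUnion₂.2 ⟨t i, htmem i hiN, hΛsub i hiN hxi⟩
    rw [Metric.infDist_zero_of_mem hxB]
    exact hC0
  · intro x hx
    rw [Set.mem_iUnion₂] at hx
    obtain ⟨u, hu, hxu⟩ := hx
    -- find i < N with t i ≤ u ≤ t (i+1)
    obtain ⟨i, hiN, hti, hti1⟩ : ∃ i : ℕ, i < N ∧ t i ≤ u ∧ u ≤ t (i + 1) := by
      set S : Finset ℕ := (Finset.range N).filter (fun j => t j ≤ u) with hS
      have h0S : 0 ∈ S :=
        Finset.mem_filter.2 ⟨Finset.mem_range.2 (by omega), by rw [ht0]; exact hu.1⟩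
      have hSne : S.Nonempty := ⟨0, h0S⟩
      have hmax_mem : S.max' hSne ∈ Finset.filter (fun j => t j ≤ u) (Finset.range N) :=
        S.max'_mem hSne
      have hmax := Finset.mem_filter.1 hmax_mem
      refine ⟨S.max' hSne, Finset.mem_range.1 hmax.1, hmax.2, ?_⟩
      · by_cases h : S.max' hSne + 1 < N
        · by_contra hlt
          push_neg at hlt
          have hmem : S.max' hSne + 1 ∈ S :=
            Finset.mem_filter.2 ⟨Finset.mem_range.2 h, le_of_lt hlt⟩
          have := S.le_max' _ hmem
          omega
        · have hmaxN : S.max' hSne < N := Finset.mem_range.1 hmax.1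
          have heq : S.max' hSne + 1 = N := by omega
          rw [heq, htN]; exact hu.2
    have hiN' : i ≤ N := le_of_lt hiN
    have hedist : EMetric.hausdorffEdist (R u) (Λ i) ≠ ⊤ :=
      Metric.hausdorffEdist_ne_top_of_nonempty_of_bounded (hRne u hu)
        (hΛne i hiN') (hRcp u hu).isBounded (hΛcp i hiN').isBounded
    have h1 : Metric.infDist x (Λ i) ≤ C :=
      le_trans (Metric.infDist_le_hausdorffDist_of_mem hxu hedist)
        (hC i hiN u ⟨hti, hti1⟩)
    refine le_trans ?_ h1
    apply Metric.infDist_le_infDist_of_subset _ (hΛne i hiN')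
    intro y hy
    simp only [Set.mem_iUnion, Finset.mem_range]
    exact ⟨i, by omega, hy⟩
end

section
/- For a compact interval [a,b], nonempty convex compact U ⊆ ℝ^m, and integrable F : [a,b] → ℝ^{n×m}, the Hausdorff distance between the constant-selection set (∫_a^b F(s)ds)·U and the Aumann integral ∫_a^b F(s)U ds is at most ‖U‖·∫_a^b ‖F(s) − avg_{[a,b]}(F)‖ ds, where avg_{[a,b]}(F) = (1/(b−a))∫_a^b F. -/
open MeasureTheory intervalIntegral

/-- The Hausdorff distance between the constant-selection set
`(∫_a^b F)·U` and the Aumann integral `∫_a^b F(s)U ds` is at most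
`‖U‖·∫_a^b ‖F(s) − avg_{[a,b]} F‖ ds`. -/
theorem hausdorff_dist_constant_selection_aumann {n m : ℕ} (a b : ℝ) (hab : a < b)
    (U : Set (EuclideanSpace ℝ (Fin m)))
    (hUne : U.Nonempty) (hUcp : IsCompact U) (hUcv : Convex ℝ U)
    (F : ℝ → EuclideanSpace ℝ (Fin m) →L[ℝ] EuclideanSpace ℝ (Fin n))
    (hF : IntegrableOn F (Set.Icc a b)) :
    Metric.hausdorffDist
        ((fun u => (∫ s in a..b, F s) u) '' U)
        {y | ∃ u : ℝ → EuclideanSpace ℝ (Fin m), Measurable u ∧ (∀ s, u s ∈ U) ∧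
          y = ∫ s in a..b, F s (u s)}
      ≤ (⨆ u ∈ U, ‖u‖) * ∫ s in a..b, ‖F s - (b - a)⁻¹ • ∫ w in a..b, F w‖ := by
  have hab' : a ≤ b := hab.le
  have hba : (0:ℝ) < b - a := by linarith
  set μ := volume.restrict (Set.Ioc a b) with hμ
  have hμuniv : μ Set.univ = ENNReal.ofReal (b - a) := by
    simp [hμ, Real.volume_Ioc]
  have hμfin : IsFiniteMeasure μ := ⟨by rw [hμuniv]; exact ENNReal.ofReal_lt_top⟩
  have hμne : NeZero μ := by
    refine ⟨fun h => ?_⟩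
    rw [h] at hμuniv
    simp at hμuniv
    linarith
  -- integrability of F on Ioc
  have hFi : Integrable F μ := hF.mono_set Set.Ioc_subset_Icc_self
  -- the sup norm bound
  set K := ⨆ u ∈ U, ‖u‖ with hK
  have hbdd : BddAbove ((fun u => ‖u‖) '' U) :=
    (hUcp.image continuous_norm).bddAbove
  have hbdd' : BddAbove (Set.range fun i : U => ‖(i:EuclideanSpace ℝ (Fin m))‖) := by
    rw [← Set.image_eq_range]; exact hbdd
  obtain ⟨u₀, hu₀⟩ := hUne
  have hsub : (⨆ i : U, ‖(i:EuclideanSpace ℝ (Fin m))‖) = K := by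
    refine ciSup_subtype_fun hbdd' ?_
    rw [Real.sSup_empty]
    exact le_trans (norm_nonneg u₀) (le_ciSup hbdd' ⟨u₀, hu₀⟩)
  have hKle : ∀ v ∈ U, ‖v‖ ≤ K := fun v hv => hsub ▸ le_ciSup_set hbdd hv
  have hK0 : 0 ≤ K := le_trans (norm_nonneg u₀) (hKle u₀ hu₀)
  -- notation
  set M := ∫ s in a..b, F s with hM
  set A := (b - a)⁻¹ • M with hA
  have hIi : Integrable (fun s => ‖F s - A‖) μ := (hFi.sub (integrable_const A)).norm
  have hI0 : (0:ℝ) ≤ ∫ s in a..b, ‖F s - A‖ := by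
    rw [integral_of_le hab']
    exact integral_nonneg fun s => norm_nonneg _
  have hC0 : (0:ℝ) ≤ K * ∫ s in a..b, ‖F s - A‖ := mul_nonneg hK0 hI0
  -- integrability of selections
  have key_int : ∀ u : ℝ → EuclideanSpace ℝ (Fin m), Measurable u → (∀ s, u s ∈ U) →
      Integrable (fun s => F s (u s)) μ := by
    intro u hum huU
    have hmeas : AEStronglyMeasurable (fun s => F s (u s)) μ := by
      have : Continuous fun p : (EuclideanSpace ℝ (Fin m) →L[ℝ] EuclideanSpace ℝ (Fin n)) ×
          EuclideanSpace ℝ (Fin m) => p.1 p.2 := isBoundedBilinearMap_apply.continuous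
      exact this.comp_aestronglyMeasurable
        (hFi.aestronglyMeasurable.prodMk hum.aestronglyMeasurable)
    refine (hFi.norm.mul_const K).mono' hmeas ?_
    filter_upwards with s
    calc ‖F s (u s)‖ ≤ ‖F s‖ * ‖u s‖ := (F s).le_opNorm _
      _ ≤ ‖F s‖ * K := by
          exact mul_le_mul_of_nonneg_left (hKle _ (huU s)) (norm_nonneg _)
  refine Metric.hausdorffDist_le_of_mem_dist hC0 ?_ ?_
  · -- constant selections are in the Aumann set
    rintro x ⟨u, hu, rfl⟩
    refine ⟨M u, ⟨fun _ => u, measurable_const, fun _ => hu, ?_⟩, by simpa using hC0⟩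
    rw [hM, integral_of_le hab', integral_of_le hab',
      ContinuousLinearMap.integral_apply hFi]
  · -- every Aumann point is close to a constant one
    rintro y ⟨u, hum, huU, rfl⟩
    have hui : Integrable u μ := by
      refine (integrable_const K).mono' hum.aestronglyMeasurable ?_
      filter_upwards with s using hKle _ (huU s)
    set ubar := ⨍ s, u s ∂μ with hubar
    have hubarU : ubar ∈ U := hUcv.average_mem hUcp.isClosed
      (Filter.Eventually.of_forall fun s => huU s) hui
    refine ⟨M ubar, ⟨ubar, hubarU, rfl⟩, ?_⟩
    have hFu : Integrable (fun s => F s (u s)) μ := key_int u hum huU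
    have hAu : Integrable (fun s => A (u s)) μ := A.integrable_comp hui
    -- M ubar = ∫ A (u s)
    have hMubar : M ubar = ∫ s, A (u s) ∂μ := by
      rw [ContinuousLinearMap.integral_comp_comm A hui]
      have h1 : ∫ s, u s ∂μ = (b - a) • ubar := by
        rw [hubar, average_eq, smul_smul, measureReal_def, hμuniv, ENNReal.toReal_ofReal hba.le,
          mul_inv_cancel₀ hba.ne', one_smul]
      rw [h1, A.map_smul, hA, ContinuousLinearMap.smul_apply, smul_smul,
        mul_inv_cancel₀ hba.ne', one_smul]
    rw [dist_eq_norm, hMubar, integral_of_le hab']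
    rw [← integral_sub hFu hAu]
    have : (fun s => F s (u s) - A (u s)) = fun s => (F s - A) (u s) := by
      funext s; simp
    rw [this]
    calc ‖∫ s, (F s - A) (u s) ∂μ‖ ≤ ∫ s, ‖(F s - A) (u s)‖ ∂μ :=
          norm_integral_le_integral_norm _
      _ ≤ ∫ s, ‖F s - A‖ * K ∂μ := by
          refine integral_mono_of_nonneg (Filter.Eventually.of_forall fun s => norm_nonneg _)
            (hIi.mul_const K) (Filter.Eventually.of_forall fun s => ?_)
          calc ‖(F s - A) (u s)‖ ≤ ‖F s - A‖ * ‖u s‖ := (F s - A).le_opNorm _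
            _ ≤ ‖F s - A‖ * K :=
                mul_le_mul_of_nonneg_left (hKle _ (huU s)) (norm_nonneg _)
      _ = (∫ s, ‖F s - A‖ ∂μ) * K := integral_mul_const _ _
      _ = K * ∫ s in a..b, ‖F s - A‖ := by rw [integral_of_le hab', mul_comm]
end
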